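/- arXiv:2010.10413 — 6 statements merged into one kernel-verified Lean document; each statement's English description precedes it below -/
import Mathlib

section
/- Let X be a finite simple graph on n vertices with complement X̄, let u ≠ v be vertices, and let τ ∈ ℝ satisfy nτ ∈ 2πℤ. If exp(iτ L(X)) e_u = α e_u + β e_v for some α, β ∈ ℂ, then exp(iτ L(X̄)) = exp(−iτ L(X)), and consequently exp(iτ L(X̄)) e_u = conj(α) e_u + conj(β) e_v; in particular X̄ admits Laplacian fractional revival (proper if β ≠ 0, and perfect state transfer if α = 0) between u and v at time τ whenever X does. -/
open Matrix

noncomputable def lapR {V : Type*} [Fintype V] [DecidableEq V] (G : SimpleGraph V) :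
    Matrix V V ℝ :=
  letI := Classical.decRel G.Adj
  G.lapMatrix ℝ

noncomputable def lapC {V : Type*} [Fintype V] [DecidableEq V] (G : SimpleGraph V) :
    Matrix V V ℂ :=
  (lapR G).map Complex.ofReal

noncomputable def transition {V : Type*} [Fintype V] [DecidableEq V] (G : SimpleGraph V)
    (t : ℝ) : Matrix V V ℂ :=
  NormedSpace.exp ((Complex.I * (t : ℂ)) • lapC G)

/-- proper Laplacian fractional revival between distinct vertices `a, b` at time `τ`. -/
def properLaFR {V : Type*} [Fintype V] [DecidableEq V] (G : SimpleGraph V) (a b : V)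
    (τ : ℝ) : Prop :=
  a ≠ b ∧ ∃ α β : ℂ, β ≠ 0 ∧
    transition G τ *ᵥ Pi.single a 1 =
      α • (Pi.single a 1 : V → ℂ) + β • (Pi.single b 1 : V → ℂ)

/-- Laplacian periodicity at vertex `a` at time `τ`. -/
def periodicAt {V : Type*} [Fintype V] [DecidableEq V] (G : SimpleGraph V) (a : V)
    (τ : ℝ) : Prop :=
  ∃ α : ℂ, transition G τ *ᵥ Pi.single a 1 = α • (Pi.single a 1 : V → ℂ)

/-- The matrix of the orthogonal projection onto the `μ`-eigenspace of the Laplacian. -/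
noncomputable def eigProj {V : Type*} [Fintype V] [DecidableEq V] (G : SimpleGraph V)
    (μ : ℝ) : Matrix V V ℝ :=
  Matrix.toEuclideanLin.symm
    ((Module.End.eigenspace (Matrix.toEuclideanLin (lapR G)) μ).subtype ∘ₗ
      (Submodule.orthogonalProjectionOnto
        (Module.End.eigenspace (Matrix.toEuclideanLin (lapR G)) μ) :
          EuclideanSpace ℝ V →L[ℝ] _).toLinearMap)

def StronglyCospectral {V : Type*} [Fintype V] [DecidableEq V] (G : SimpleGraph V)
    (a b : V) : Prop :=
  ∀ μ : ℝ, eigProj G μ *ᵥ Pi.single a 1 = eigProj G μ *ᵥ Pi.single b 1 ∨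
    eigProj G μ *ᵥ Pi.single a 1 = -(eigProj G μ *ᵥ Pi.single b 1)

def PhiPlus {V : Type*} [Fintype V] [DecidableEq V] (G : SimpleGraph V) (a b : V) :
    Set ℝ :=
  {μ | eigProj G μ *ᵥ Pi.single a 1 = eigProj G μ *ᵥ Pi.single b 1 ∧
    eigProj G μ *ᵥ Pi.single a 1 ≠ 0}

def PhiMinus {V : Type*} [Fintype V] [DecidableEq V] (G : SimpleGraph V) (a b : V) :
    Set ℝ :=
  {μ | eigProj G μ *ᵥ Pi.single a 1 = -(eigProj G μ *ᵥ Pi.single b 1) ∧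
    eigProj G μ *ᵥ Pi.single a 1 ≠ 0}

def eigSupport {V : Type*} [Fintype V] [DecidableEq V] (G : SimpleGraph V) (a : V) :
    Set ℝ :=
  {μ | eigProj G μ *ᵥ Pi.single a 1 ≠ 0}

/-- `r` is an integer multiple of the natural number `g`. -/
def intDvd (g : ℕ) (r : ℝ) : Prop := ∃ k : ℤ, r = (g : ℝ) * k

set_option maxHeartbeats 1000000 in
open NormedSpace in
lemma exp_smul_idem' {A : Type*} [NormedRing A] [NormedAlgebra ℂ A] [CompleteSpace A]
    (a : ℂ) (P : A) (hP : P * P = P) :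
    exp (a • P) = 1 + (Complex.exp a - 1) • P := by
  have hpow : ∀ n : ℕ, P ^ (n + 1) = P := by
    intro n; induction n with
    | zero => simp
    | succ k ih => rw [pow_succ, ih, hP]
  have hsum : Summable (fun n : ℕ => ((n.factorial : ℂ))⁻¹ • (a • P) ^ n) :=
    expSeries_summable' (𝕂 := ℂ) (a • P)
  have hsumC : Summable (fun n : ℕ => ((n.factorial : ℂ))⁻¹ • a ^ n) :=
    expSeries_summable' (𝕂 := ℂ) a
  have hsumC' : Summable (fun n : ℕ => (((n + 1).factorial : ℂ))⁻¹ • a ^ (n + 1)) :=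
    (summable_nat_add_iff 1).mpr hsumC
  have hexp : Complex.exp a = 1 + ∑' n : ℕ, (((n + 1).factorial : ℂ))⁻¹ • a ^ (n + 1) := by
    rw [Complex.exp_eq_exp_ℂ, exp_eq_tsum ℂ]; beta_reduce; rw [Summable.tsum_eq_zero_add hsumC]
    simp
  rw [exp_eq_tsum ℂ]; beta_reduce; rw [Summable.tsum_eq_zero_add hsum]
  have h1 : (fun n : ℕ => (((n + 1).factorial : ℂ))⁻¹ • (a • P) ^ (n + 1)) =
      fun n : ℕ => ((((n + 1).factorial : ℂ))⁻¹ • a ^ (n + 1)) • P := by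
    funext n
    simp [smul_pow, hpow, smul_smul]
  rw [h1, Summable.tsum_smul_const hsumC']
  have h2 : ∑' n : ℕ, (((n + 1).factorial : ℂ))⁻¹ • a ^ (n + 1) = Complex.exp a - 1 := by
    rw [hexp]; ring
  rw [h2]
  simp

section aux
variable {V : Type*} [Fintype V] [DecidableEq V]

lemma lapR_isSymm (X : SimpleGraph V) : (lapR X).IsSymm := by
  letI := Classical.decRel X.Adj
  exact X.isSymm_lapMatrix (R := ℝ)

lemma lapR_mulVec_one (X : SimpleGraph V) : lapR X *ᵥ (fun _ => (1 : ℝ)) = 0 := by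
  letI := Classical.decRel X.Adj
  exact X.lapMatrix_mulVec_const_eq_zero

lemma lapR_mul_J (X : SimpleGraph V) :
    lapR X * Matrix.of (fun _ _ => (1 : ℝ)) = 0 := by
  ext i j
  have := congrFun (lapR_mulVec_one X) i
  simpa [Matrix.mul_apply, Matrix.mulVec, dotProduct] using this

lemma J_mul_lapR (X : SimpleGraph V) :
    Matrix.of (fun _ _ => (1 : ℝ)) * lapR X = 0 := by
  ext i j
  have := congrFun (lapR_mulVec_one X) j
  simp only [Matrix.mul_apply, Matrix.of_apply, one_mul, Matrix.zero_apply]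
  calc ∑ k, lapR X k j = ∑ k, lapR X j k := by
        refine Finset.sum_congr rfl fun k _ => ?_
        exact ((lapR_isSymm X).apply j k)
    _ = 0 := by simpa [Matrix.mulVec, dotProduct] using this

lemma lapR_compl [Nonempty V] (X : SimpleGraph V) :
    lapR Xᶜ = (Fintype.card V : ℝ) • (1 : Matrix V V ℝ) - Matrix.of (fun _ _ => 1) - lapR X := by
  classical
  ext i j
  simp only [lapR, SimpleGraph.lapMatrix, SimpleGraph.degMatrix, Matrix.sub_apply,
    Matrix.diagonal_apply, SimpleGraph.adjMatrix_apply, Matrix.smul_apply, Matrix.one_apply,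
    Matrix.of_apply, SimpleGraph.compl_adj, smul_eq_mul]
  by_cases hij : i = j
  · subst hij
    have hdeg : X.degree i < Fintype.card V := X.degree_lt_card_verts i
    have h1 : 1 ≤ Fintype.card V := Fintype.card_pos
    rw [SimpleGraph.degree_compl]
    simp only [if_pos rfl]
    have : ¬ (i ≠ i ∧ ¬ X.Adj i i) := by simp
    rw [if_neg this, if_neg (by simp [SimpleGraph.irrefl] : ¬ X.Adj i i)]
    push_cast [Nat.cast_sub (by omega : X.degree i ≤ Fintype.card V - 1), Nat.cast_sub h1]
    ring
  · rw [if_neg hij]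
    by_cases hadj : X.Adj i j
    · rw [if_neg (by simp [hij, hadj]), if_pos hadj]; simp [hij]
    · rw [if_pos ⟨hij, hadj⟩, if_neg hadj]; simp [hij]

lemma lapC_eq (X : SimpleGraph V) : lapC X = (lapR X).map Complex.ofRealHom := rfl

lemma lapC_compl [Nonempty V] (X : SimpleGraph V) :
    lapC Xᶜ = (Fintype.card V : ℂ) • (1 : Matrix V V ℂ) - Matrix.of (fun _ _ => 1) - lapC X := by
  ext i j
  simp only [lapC, Matrix.map_apply, lapR_compl X, Matrix.sub_apply, Matrix.smul_apply,
    Matrix.one_apply, Matrix.of_apply, smul_eq_mul]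
  push_cast [apply_ite Complex.ofReal]
  ring_nf

end aux

/-- If `nτ ∈ 2πℤ` then the transition matrix of the complement
at time `τ` equals `exp(-iτ L(X))`, and fractional revival is transferred to the
complement with conjugated coefficients. -/
theorem complement_transition {V : Type*} [Fintype V] [DecidableEq V]
    (X : SimpleGraph V) (u v : V) (huv : u ≠ v) (τ : ℝ)
    (hτ : ∃ k : ℤ, (Fintype.card V : ℝ) * τ = 2 * Real.pi * k)
    (α β : ℂ)
    (h : transition X τ *ᵥ Pi.single u 1 =
      α • (Pi.single u 1 : V → ℂ) + β • (Pi.single v 1 : V → ℂ)) :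
    transition Xᶜ τ = NormedSpace.exp ((-(Complex.I * (τ : ℂ))) • lapC X) ∧
    transition Xᶜ τ *ᵥ Pi.single u 1 =
      (starRingEnd ℂ) α • (Pi.single u 1 : V → ℂ) +
        (starRingEnd ℂ) β • (Pi.single v 1 : V → ℂ) := by
  have : Nonempty V := ⟨u⟩
  letI : SeminormedRing (Matrix V V ℂ) := Matrix.linftyOpSemiNormedRing
  letI : NormedRing (Matrix V V ℂ) := Matrix.linftyOpNormedRing
  letI : NormedAlgebra ℂ (Matrix V V ℂ) := Matrix.linftyOpNormedAlgebra
  obtain ⟨k, hk⟩ := hτ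
  set n : ℕ := Fintype.card V with hn
  have hn0 : (n : ℂ) ≠ 0 := Nat.cast_ne_zero.mpr Fintype.card_ne_zero
  set c : ℂ := Complex.I * τ with hc
  set L : Matrix V V ℂ := lapC X with hL
  set J : Matrix V V ℂ := Matrix.of (fun _ _ => 1) with hJ
  set M : Matrix V V ℂ := (n : ℂ) • (1 : Matrix V V ℂ) - J with hM
  -- products with J
  have hLJ : L * J = 0 := by
    rw [hL, hJ, lapC_eq, show (Matrix.of (fun _ _ => (1:ℂ)) : Matrix V V ℂ) =
      (Matrix.of (fun _ _ => (1:ℝ))).map Complex.ofRealHom by ext i j; simp,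
      ← Matrix.map_mul, lapR_mul_J]
    simp
  have hJL : J * L = 0 := by
    rw [hL, hJ, lapC_eq, show (Matrix.of (fun _ _ => (1:ℂ)) : Matrix V V ℂ) =
      (Matrix.of (fun _ _ => (1:ℝ))).map Complex.ofRealHom by ext i j; simp,
      ← Matrix.map_mul, J_mul_lapR]
    simp
  have hJJ : J * J = (n : ℂ) • J := by
    ext i j
    simp [hJ, Matrix.mul_apply, hn]
  have hMM : M * M = (n : ℂ) • M := by
    rw [hM]
    rw [sub_mul, mul_sub, mul_sub, hJJ]
    simp only [smul_mul_assoc, mul_smul_comm, one_mul, mul_one, smul_sub, smul_smul]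
    abel
  have hML : M * L = L * M := by
    rw [hM]
    simp [sub_mul, mul_sub, hJL, hLJ, smul_mul_assoc, mul_smul_comm]
  -- exp (c • M) = 1
  have hexpcn : Complex.exp (c * n) = 1 := by
    have : c * n = (k : ℂ) * (2 * Real.pi * Complex.I) := by
      have hk' : (((n : ℝ) * τ : ℝ) : ℂ) = ((2 * Real.pi * k : ℝ) : ℂ) := congrArg Complex.ofReal hk
      push_cast at hk' ⊢
      linear_combination Complex.I * hk'
    rw [this, Complex.exp_int_mul_two_pi_mul_I]
  have hexpM : NormedSpace.exp (c • M) = 1 := by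
    have hP : ((n : ℂ)⁻¹ • M) * ((n : ℂ)⁻¹ • M) = (n : ℂ)⁻¹ • M := by
      simp only [smul_mul_assoc, mul_smul_comm, hMM, smul_smul]
      rw [show (n : ℂ)⁻¹ * ((n : ℂ)⁻¹ * (n : ℂ)) = (n : ℂ)⁻¹ by field_simp]
    have hcM : c • M = (c * n) • ((n : ℂ)⁻¹ • M) := by
      rw [smul_smul, mul_assoc, mul_inv_cancel₀ hn0, mul_one]
    rw [hcM]; erw [exp_smul_idem' _ _ hP]; rw [hexpcn]
    simp
  -- first claim
  have hsplit : transition Xᶜ τ = NormedSpace.exp ((-c) • L) := by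
    have hXc : lapC Xᶜ = M - L := by rw [hM, hL, hJ, lapC_compl]
    have hdecomp : c • lapC Xᶜ = c • M + (-c) • L := by rw [hXc]; module
    have hcomm : Commute (c • M) ((-c) • L) := by
      have : Commute M L := hML
      exact (this.smul_left c).smul_right (-c)
    rw [transition, ← hc, hdecomp, Matrix.exp_add_of_commute _ _ hcomm, hexpM, one_mul]
  constructor
  · rw [hsplit]
  · -- symmetry of lapC
    have hLsym : Lᵀ = L := by
      ext i j
      simp only [hL, lapC, Matrix.transpose_apply, Matrix.map_apply]
      exact congrArg _ ((lapR_isSymm X).apply i j)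
    have hLherm : Lᴴ = L := by
      ext i j
      simp only [hL, lapC, Matrix.conjTranspose_apply, Matrix.map_apply, Complex.star_def,
        Complex.conj_ofReal]
      exact congrArg _ ((lapR_isSymm X).apply i j)
    have hstarc : star c = -c := by
      rw [hc, star_mul', Complex.star_def, Complex.conj_I, Complex.conj_ofReal]
      ring
    set A : Matrix V V ℂ := NormedSpace.exp (c • L) with hA
    have hAsym : Aᵀ = A := by
      rw [hA, ← Matrix.exp_transpose, Matrix.transpose_smul, hLsym]
    have hAherm : NormedSpace.exp ((-c) • L) = Aᴴ := by
      rw [hA, ← Matrix.exp_conjTranspose, Matrix.conjTranspose_smul, hLherm, hstarc]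
    rw [hsplit, hAherm]
    funext i
    have hAi : A i u = α * (Pi.single u 1 : V → ℂ) i + β * (Pi.single v 1 : V → ℂ) i := by
      have := congrFun h i
      simpa [transition, ← hc, ← hA, Matrix.mulVec_single] using this
    have : Aᴴ i u = star (A i u) := by
      rw [Matrix.conjTranspose_apply, ← Matrix.transpose_apply A u i, hAsym]
    simp only [Matrix.mulVec_single_one, Matrix.col_apply, mul_one, this, hAi, Pi.add_apply, Pi.smul_apply,
      smul_eq_mul, star_add, star_mul']
    by_cases hiu : i = u <;> by_cases hiv : i = v <;>
      simp [hiu, hiv, Pi.single_apply, Complex.star_def]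
end

section
/- Let n ≥ 3 and let Y be any finite simple graph on n − 2 vertices. The double cone Z over Y, i.e., the join of the edgeless graph on two vertices a, b with Y (a graph on n vertices), admits proper Laplacian fractional revival between the conical vertices a and b at time 2π/n. Moreover, this fractional revival is Laplacian perfect state transfer (i.e., the coefficient of e_a is 0) if and only if n = 4. -/
open Matrix

lemma exp_mulVec_eig {V : Type*} [Fintype V] [DecidableEq V]
    (M : Matrix V V ℂ) (v : V → ℂ) (μ : ℂ) (h : M *ᵥ v = μ • v) :
    NormedSpace.exp M *ᵥ v = Complex.exp μ • v := by
  letI : SeminormedRing (Matrix V V ℂ) := Matrix.linftyOpSemiNormedRing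
  letI : NormedRing (Matrix V V ℂ) := Matrix.linftyOpNormedRing
  letI : NormedAlgebra ℂ (Matrix V V ℂ) := Matrix.linftyOpNormedAlgebra
  have hpow : ∀ k : ℕ, (M ^ k) *ᵥ v = (μ ^ k) • v := by
    intro k
    induction k with
    | zero => simp
    | succ k ih =>
      rw [pow_succ, pow_succ, ← Matrix.mulVec_mulVec, h, Matrix.mulVec_smul, ih]
      rw [smul_smul, mul_comm]
  have hlin : IsLinearMap ℂ (fun A : Matrix V V ℂ => A *ᵥ v) :=
    ⟨fun A B => Matrix.add_mulVec A B v, fun c A => Matrix.smul_mulVec c A v⟩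
  let f : Matrix V V ℂ →L[ℂ] (V → ℂ) := LinearMap.toContinuousLinearMap (IsLinearMap.mk' _ hlin)
  have hsum : Summable (fun k : ℕ => ((k.factorial : ℂ))⁻¹ • M ^ k) :=
    NormedSpace.expSeries_summable' M
  have hf : f (NormedSpace.exp M) = ∑' k : ℕ, f (((k.factorial : ℂ))⁻¹ • M ^ k) := by
    rw [NormedSpace.exp_eq_tsum ℂ]
    exact f.map_tsum hsum
  have : NormedSpace.exp M *ᵥ v = ∑' k : ℕ, ((k.factorial : ℂ))⁻¹ • (μ ^ k • v) := by
    have := hf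
    simp only [f, LinearMap.coe_toContinuousLinearMap', IsLinearMap.mk'_apply] at this
    rw [this]
    congr 1; funext k
    rw [Matrix.smul_mulVec, hpow]
  rw [this]
  have hsum2 : Summable (fun k : ℕ => ((k.factorial : ℂ))⁻¹ * μ ^ k) := by
    simpa [smul_eq_mul] using NormedSpace.expSeries_summable' (𝕂 := ℂ) μ
  calc ∑' k : ℕ, ((k.factorial : ℂ))⁻¹ • (μ ^ k • v)
      = ∑' k : ℕ, (((k.factorial : ℂ))⁻¹ * μ ^ k) • v := by
        congr 1; funext k; rw [smul_smul]
    _ = (∑' k : ℕ, ((k.factorial : ℂ))⁻¹ * μ ^ k) • v := by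
        rw [hsum2.tsum_smul_const]
    _ = Complex.exp μ • v := by
        congr 1
        rw [Complex.exp_eq_exp_ℂ, NormedSpace.exp_eq_tsum ℂ]
        simp [smul_eq_mul]

set_option maxHeartbeats 2000000 in
/-- Any double cone on `n ≥ 3` vertices admits proper Laplacian
fractional revival between its conical vertices at time `2π/n`, and it is
perfect state transfer iff `n = 4`. -/
theorem doubleCone_properLaFR {V : Type*} [Fintype V] [DecidableEq V]
    (Z : SimpleGraph V) (n : ℕ) (hn : 3 ≤ n) (hcard : Fintype.card V = n)
    (a b : V) (hab : a ≠ b) (hnadj : ¬ Z.Adj a b)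
    (hcone : ∀ v : V, v ≠ a → v ≠ b → Z.Adj a v ∧ Z.Adj b v) :
    ∃ α β : ℂ, β ≠ 0 ∧
      transition Z (2 * Real.pi / n) *ᵥ Pi.single a 1 =
        α • (Pi.single a 1 : V → ℂ) + β • (Pi.single b 1 : V → ℂ) ∧
      (α = 0 ↔ n = 4) := by
  letI := Classical.decRel Z.Adj
  have hnR0 : (n : ℝ) ≠ 0 := by
    simp only [ne_eq, Nat.cast_eq_zero]; omega
  have hnC0 : (n : ℂ) ≠ 0 := by
    simp only [ne_eq, Nat.cast_eq_zero]; omega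
  have hnadj' : ¬ Z.Adj b a := fun h => hnadj h.symm
  -- entries of the Laplacian
  have hentry : ∀ i j : V, lapC Z i j =
      (if i = j then (Z.degree i : ℂ) else 0) - (if Z.Adj i j then 1 else 0) := by
    intro i j
    simp only [lapC, lapR, Matrix.map_apply, SimpleGraph.lapMatrix, SimpleGraph.degMatrix,
      Matrix.sub_apply, Matrix.diagonal_apply, SimpleGraph.adjMatrix_apply]
    push_cast [apply_ite (Complex.ofReal)]
    ring
  -- degrees
  have hNa : Z.neighborFinset a = Finset.univ \ {a, b} := by
    ext v
    simp only [SimpleGraph.mem_neighborFinset, Finset.mem_sdiff, Finset.mem_univ, true_and,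
      Finset.mem_insert, Finset.mem_singleton]
    constructor
    · intro hv
      push_neg
      refine ⟨fun h => ?_, fun h => ?_⟩
      · exact Z.loopless.irrefl a (h ▸ hv)
      · exact hnadj (h ▸ hv)
    · intro hv
      push_neg at hv
      exact (hcone v hv.1 hv.2).1
  have hNb : Z.neighborFinset b = Finset.univ \ {a, b} := by
    ext v
    simp only [SimpleGraph.mem_neighborFinset, Finset.mem_sdiff, Finset.mem_univ, true_and,
      Finset.mem_insert, Finset.mem_singleton]
    constructor
    · intro hv
      push_neg
      refine ⟨fun h => ?_, fun h => ?_⟩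
      · exact hnadj' (h ▸ hv)
      · exact Z.loopless.irrefl b (h ▸ hv)
    · intro hv
      push_neg at hv
      exact (hcone v hv.1 hv.2).2
  have hcard2 : (Finset.univ \ ({a, b} : Finset V)).card = n - 2 := by
    rw [Finset.card_sdiff_of_subset (Finset.subset_univ _), Finset.card_univ, hcard]
    congr 1
    rw [Finset.card_insert_of_notMem (by simpa using hab), Finset.card_singleton]
  have hdegA : (Z.degree a : ℂ) = (n : ℂ) - 2 := by
    rw [← SimpleGraph.card_neighborFinset_eq_degree, hNa, hcard2]
    push_cast [Nat.cast_sub (by omega : 2 ≤ n)]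
    ring
  have hdegB : (Z.degree b : ℂ) = (n : ℂ) - 2 := by
    rw [← SimpleGraph.card_neighborFinset_eq_degree, hNb, hcard2]
    push_cast [Nat.cast_sub (by omega : 2 ≤ n)]
    ring
  -- eigenvector equations
  have h0 : lapC Z *ᵥ (fun _ => (1 : ℂ)) = (0 : ℂ) • (fun _ => (1 : ℂ)) := by
    funext i
    have hr : (Z.lapMatrix ℝ *ᵥ (fun _ => (1:ℝ))) i = 0 := by
      rw [Z.lapMatrix_mulVec_const_eq_zero]; rfl
    have hsum : ∑ w, lapR Z i w = 0 := by
      simpa [Matrix.mulVec, dotProduct, lapR] using hr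
    simp only [Matrix.mulVec, dotProduct, lapC, Matrix.map_apply, mul_one,
      Pi.smul_apply, smul_eq_mul, zero_mul]
    rw [← Complex.ofReal_sum, hsum, Complex.ofReal_zero]
  have h1 : lapC Z *ᵥ (Pi.single a 1 - Pi.single b 1) =
      ((n : ℂ) - 2) • (Pi.single a 1 - Pi.single b 1 : V → ℂ) := by
    funext i
    rw [Matrix.mulVec_sub]
    simp only [Matrix.mulVec_single_one, Matrix.col_apply, Pi.sub_apply, Pi.smul_apply, mul_one, smul_eq_mul]
    rw [hentry i a, hentry i b]
    rcases eq_or_ne i a with rfl | hia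
    · simp [hab, hnadj, Z.loopless.irrefl i, hdegA, Pi.single_apply, hab.symm]
    · rcases eq_or_ne i b with rfl | hib
      · simp [hab.symm, hnadj', Z.loopless.irrefl i, hdegB, Pi.single_apply]
      · have hAi : Z.Adj i a := ((hcone i hia hib).1).symm
        have hBi : Z.Adj i b := ((hcone i hia hib).2).symm
        simp [hia, hib, hAi, hBi, Pi.single_apply, Ne.symm hia, Ne.symm hib]
  have h2 : lapC Z *ᵥ ((n : ℂ) • (Pi.single a 1 + Pi.single b 1) - (2 : ℂ) • (fun _ => (1:ℂ)) : V → ℂ) =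
      (n : ℂ) • ((n : ℂ) • (Pi.single a 1 + Pi.single b 1 : V → ℂ) - (2 : ℂ) • (fun _ => (1:ℂ)) : V → ℂ) := by
    rw [Matrix.mulVec_sub, Matrix.mulVec_smul, Matrix.mulVec_smul, Matrix.mulVec_add, h0]
    funext i
    simp only [Matrix.mulVec_single_one, Matrix.col_apply, Pi.sub_apply, Pi.smul_apply, Pi.add_apply, mul_one,
      smul_eq_mul, smul_zero, zero_mul, Pi.zero_apply, mul_zero]
    rw [hentry i a, hentry i b]
    rcases eq_or_ne i a with rfl | hia
    · simp [hab, hnadj, Z.loopless.irrefl i, hdegA, Pi.single_apply, hab.symm]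
    · rcases eq_or_ne i b with rfl | hib
      · simp [hab.symm, hnadj', Z.loopless.irrefl i, hdegB, Pi.single_apply]
      · have hAi : Z.Adj i a := ((hcone i hia hib).1).symm
        have hBi : Z.Adj i b := ((hcone i hia hib).2).symm
        simp only [Pi.single_apply, if_pos hAi, if_pos hBi, if_neg hia, if_neg hib,
          if_neg (Ne.symm hia), if_neg (Ne.symm hib)]
        ring
  -- decomposition of e_a
  have hdecomp : (Pi.single a 1 : V → ℂ) =
      (2 : ℂ)⁻¹ • (Pi.single a 1 - Pi.single b 1)
      + ((2 : ℂ) * n)⁻¹ • ((n : ℂ) • (Pi.single a 1 + Pi.single b 1) - (2 : ℂ) • (fun _ => (1:ℂ)) : V → ℂ)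
      + ((n : ℂ))⁻¹ • (fun _ => (1 : ℂ)) := by
    funext i
    simp only [Pi.add_apply, Pi.smul_apply, Pi.sub_apply, smul_eq_mul]
    generalize (Pi.single a 1 : V → ℂ) i = x
    generalize (Pi.single b 1 : V → ℂ) i = y
    field_simp
    ring
  -- exponential action
  set τ : ℝ := 2 * Real.pi / n with hτ
  set c : ℂ := Complex.I * (τ : ℂ) with hc
  have hexp : ∀ (v : V → ℂ) (μ : ℂ), lapC Z *ᵥ v = μ • v →
      transition Z τ *ᵥ v = Complex.exp (c * μ) • v := by
    intro v μ hv
    have hM : (c • lapC Z) *ᵥ v = (c * μ) • v := by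
      rw [Matrix.smul_mulVec, hv, smul_smul]
    exact exp_mulVec_eig _ _ _ hM
  have hcn : Complex.exp (c * (n : ℂ)) = 1 := by
    have : c * (n : ℂ) = 2 * (Real.pi : ℂ) * Complex.I := by
      rw [hc, hτ]
      push_cast
      field_simp
    rw [this, Complex.exp_two_pi_mul_I]
  set θ : ℝ := 2 * Real.pi * ((n : ℝ) - 2) / n with hθdef
  set z : ℂ := Complex.exp (c * ((n : ℂ) - 2)) with hzdef
  have hzz : z = Complex.exp ((θ : ℂ) * Complex.I) := by
    rw [hzdef]
    congr 1
    rw [hc, hτ, hθdef]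
    push_cast
    ring
  have hpi := Real.pi_pos
  have hnR3 : (3 : ℝ) ≤ n := by exact_mod_cast hn
  have hθpos : 0 < θ := by
    rw [hθdef]
    apply div_pos (by nlinarith) (by linarith)
  have hθlt : θ < 2 * Real.pi := by
    rw [hθdef, div_lt_iff₀ (by linarith : (0:ℝ) < n)]
    nlinarith
  have hzne1 : z ≠ 1 := by
    rw [hzz]
    intro heq
    rw [Complex.exp_eq_one_iff] at heq
    obtain ⟨k, hk⟩ := heq
    have h2' : (θ : ℂ) * Complex.I = ((k : ℂ) * (2 * (Real.pi : ℂ))) * Complex.I := by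
      rw [hk]; push_cast; ring
    have h3 := mul_right_cancel₀ Complex.I_ne_zero h2'
    have h4 : θ = (k : ℝ) * (2 * Real.pi) := by exact_mod_cast h3
    have hk0 : (0:ℝ) < (k:ℝ) := by nlinarith
    have hk1 : (k:ℝ) < 1 := by nlinarith
    have hk0' : (0:ℤ) < k := by exact_mod_cast hk0
    have : (1:ℝ) ≤ (k:ℝ) := by exact_mod_cast hk0'
    linarith
  have hm1 : z = -1 ↔ θ = Real.pi := by
    rw [hzz]
    constructor
    · intro h
      have h1' : Complex.exp ((θ : ℂ) * Complex.I + (Real.pi : ℂ) * Complex.I) = 1 := by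
        rw [Complex.exp_add, h, Complex.exp_pi_mul_I]; ring
      rw [Complex.exp_eq_one_iff] at h1'
      obtain ⟨k, hk⟩ := h1'
      have h2' : ((θ : ℂ) + (Real.pi : ℂ)) * Complex.I
          = ((k : ℂ) * (2 * (Real.pi : ℂ))) * Complex.I := by
        push_cast at hk ⊢
        linear_combination hk
      have h3 := mul_right_cancel₀ Complex.I_ne_zero h2'
      have h4 : θ + Real.pi = (k : ℝ) * (2 * Real.pi) := by exact_mod_cast h3
      have hklb : (1:ℝ)/2 < (k:ℝ) := by nlinarith
      have hkub : (k:ℝ) < 3/2 := by nlinarith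
      have hk1 : k = 1 := by
        have h5 : (0:ℤ) < k := by
          by_contra hcon
          push_neg at hcon
          have : (k:ℝ) ≤ 0 := by exact_mod_cast hcon
          linarith
        have h6 : k < 2 := by
          by_contra hcon
          push_neg at hcon
          have : (2:ℝ) ≤ (k:ℝ) := by exact_mod_cast hcon
          linarith
        omega
      rw [hk1] at h4
      push_cast at h4
      linarith
    · intro h
      rw [h]
      exact Complex.exp_pi_mul_I
  have hθ4 : θ = Real.pi ↔ n = 4 := by
    rw [hθdef]
    constructor
    · intro h
      rw [div_eq_iff hnR0] at h
      have hn4 : (n:ℝ) = 4 := by nlinarith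
      exact_mod_cast hn4
    · intro h
      subst h
      norm_num
      rw [div_eq_iff (by norm_num : (4:ℝ) ≠ 0)]
      ring
  refine ⟨(1 + z) / 2, (1 - z) / 2, ?_, ?_, ?_⟩
  · intro h
    apply hzne1
    rcases div_eq_zero_iff.mp h with h' | h'
    · exact (sub_eq_zero.mp h').symm
    · norm_num at h'
  · have e0 : transition Z τ *ᵥ (fun _ => (1:ℂ)) = (fun _ => (1:ℂ)) := by
      have := hexp _ _ h0
      simpa using this
    have e1 := hexp _ _ h1
    rw [← hzdef] at e1
    have e2 := hexp _ _ h2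
    rw [hcn, one_smul] at e2
    conv_lhs => rw [hdecomp]
    rw [Matrix.mulVec_add, Matrix.mulVec_add, Matrix.mulVec_smul, Matrix.mulVec_smul,
      Matrix.mulVec_smul, e0, e1, e2]
    funext i
    simp only [Pi.add_apply, Pi.smul_apply, Pi.sub_apply, smul_eq_mul]
    generalize (Pi.single a 1 : V → ℂ) i = x
    generalize (Pi.single b 1 : V → ℂ) i = y
    field_simp
    ring
  · constructor
    · intro h
      have h' : 1 + z = 0 := by
        rcases div_eq_zero_iff.mp h with h' | h'
        · exact h'
        · norm_num at h'
      have hz1 : z = -1 := by linear_combination h'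
      exact hθ4.mp (hm1.mp hz1)
    · intro h
      have hz1 : z = -1 := hm1.mpr (hθ4.mpr h)
      rw [hz1]
      norm_num
end

section
/- Let X be a connected finite simple graph with Laplacian strongly cospectral vertices a and b, and suppose |Φ⁻| = k. Then every vertex at graph distance exactly k from a is at graph distance at most k from b. In particular, the distance between a and b is at most 2k. -/
open Matrix

section Helpers

variable {V : Type*} [Fintype V] [DecidableEq V] (X : SimpleGraph V)

lemma lapR_isHermitian : (lapR X).IsHermitian := by
  letI := Classical.decRel X.Adj
  rw [IsHermitian, conjTranspose_eq_transpose_of_trivial]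
  exact SimpleGraph.isSymm_lapMatrix (G := X) (R := ℝ)

lemma lapR_isSymmetric : (Matrix.toEuclideanLin (lapR X)).IsSymmetric :=
  Matrix.isHermitian_iff_isSymmetric.mp (lapR_isHermitian X)

lemma eigProj_apply (μ : ℝ) (u : V → ℝ) :
    eigProj X μ *ᵥ u = WithLp.ofLp ((Submodule.orthogonalProjectionOnto
      (Module.End.eigenspace (Matrix.toEuclideanLin (lapR X)) μ)
        (WithLp.toLp 2 u) : EuclideanSpace ℝ V)) := by
  calc eigProj X μ *ᵥ u = WithLp.ofLp (Matrix.toEuclideanLin (eigProj X μ) (WithLp.toLp 2 u)) := rfl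
    _ = _ := by rw [eigProj, LinearEquiv.apply_symm_apply]; rfl

lemma eigProj_mem (μ : ℝ) (u : V → ℝ) :
    WithLp.toLp 2 (eigProj X μ *ᵥ u : V → ℝ) ∈ Module.End.eigenspace (Matrix.toEuclideanLin (lapR X)) μ := by
  rw [eigProj_apply]
  exact (Submodule.orthogonalProjectionOnto _ (WithLp.toLp 2 u)).2

lemma eigProj_isHermitian (μ : ℝ) : (eigProj X μ).IsHermitian := by
  rw [Matrix.isHermitian_iff_isSymmetric]
  intro x y
  have h := Submodule.starProjection_isSymmetric
    (𝕜 := ℝ) (Module.End.eigenspace (Matrix.toEuclideanLin (lapR X)) μ) x y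
  have e : ∀ z : EuclideanSpace ℝ V, Matrix.toEuclideanLin (eigProj X μ) z =
      ((Submodule.orthogonalProjectionOnto (Module.End.eigenspace (Matrix.toEuclideanLin (lapR X)) μ) z :
        EuclideanSpace ℝ V)) := by
    intro z
    rw [eigProj, LinearEquiv.apply_symm_apply]; rfl
  rw [e, e]; exact h

lemma lap_mul_eigProj (μ : ℝ) : lapR X * eigProj X μ = μ • eigProj X μ := by
  ext v w
  have h := eigProj_mem X μ (Pi.single w 1)
  rw [Module.End.mem_eigenspace_iff] at h
  have h2 : lapR X *ᵥ (eigProj X μ *ᵥ Pi.single w 1) = μ • (eigProj X μ *ᵥ Pi.single w 1) := congrArg WithLp.ofLp h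
  have h3 := congrFun h2 v
  rw [Matrix.mulVec_mulVec] at h3
  rw [Matrix.mulVec_single_one] at h3
  simpa [Matrix.smul_apply, Matrix.mulVec_single_one] using h3

lemma eigProj_mul_lap (μ : ℝ) : eigProj X μ * lapR X = μ • eigProj X μ := by
  have h1 := congrArg Matrix.transpose (lap_mul_eigProj X μ)
  have hP : (eigProj X μ)ᵀ = eigProj X μ := by
    rw [← conjTranspose_eq_transpose_of_trivial]; exact (eigProj_isHermitian X μ).eq
  have hL : (lapR X)ᵀ = lapR X := by
    rw [← conjTranspose_eq_transpose_of_trivial]; exact (lapR_isHermitian X).eq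
  rwa [Matrix.transpose_mul, Matrix.transpose_smul, hP, hL] at h1

lemma eigProj_mul_pow (μ : ℝ) (n : ℕ) :
    eigProj X μ * (lapR X) ^ n = μ ^ n • eigProj X μ := by
  induction n with
  | zero => simp
  | succ n ih =>
    rw [pow_succ, ← Matrix.mul_assoc, ih, Matrix.smul_mul, eigProj_mul_lap, smul_smul, pow_succ]

lemma eigProj_mul_aeval (μ : ℝ) (q : Polynomial ℝ) :
    eigProj X μ * (Polynomial.aeval (lapR X)) q = q.eval μ • eigProj X μ := by
  rw [Polynomial.aeval_eq_sum_range, Polynomial.eval_eq_sum_range, Finset.mul_sum]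
  rw [Finset.sum_smul]
  refine Finset.sum_congr rfl fun i _ => ?_
  rw [Matrix.mul_smul, eigProj_mul_pow, smul_smul]

lemma allProjZero (u : V → ℝ) (h : ∀ μ : ℝ, eigProj X μ *ᵥ u = 0) : u = 0 := by
  have hsym := lapR_isSymmetric X
  have hmem : (WithLp.toLp 2 u) ∈
      (⨆ μ : ℝ, Module.End.eigenspace (Matrix.toEuclideanLin (lapR X)) μ)ᗮ := by
    rw [← Submodule.iInf_orthogonal]
    refine Submodule.mem_iInf _ |>.mpr fun μ => ?_
    rw [← Submodule.orthogonalProjectionOnto_eq_zero_iff]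
    have := h μ
    rw [eigProj_apply] at this
    exact Subtype.ext (congrArg (WithLp.toLp 2) this)
  rw [hsym.orthogonalComplement_iSup_eigenspaces_eq_bot] at hmem
  simpa using hmem

lemma eigProj_eq_zero_of_not_hasEigenvalue (μ : ℝ)
    (h : ¬ Module.End.HasEigenvalue (Matrix.toEuclideanLin (lapR X)) μ) :
    eigProj X μ = 0 := by
  have hbot : Module.End.eigenspace (Matrix.toEuclideanLin (lapR X)) μ = ⊥ := by
    by_contra hb; exact h hb
  ext v w
  have := eigProj_apply X μ (Pi.single w 1)
  have h0 : ((Submodule.orthogonalProjectionOnto (Module.End.eigenspace (Matrix.toEuclideanLin (lapR X)) μ)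
      (WithLp.toLp 2 (Pi.single w 1)) : EuclideanSpace ℝ V)) = 0 := by
    have hz := (Submodule.eq_bot_iff _).mp hbot _
      (Submodule.orthogonalProjectionOnto (Module.End.eigenspace (Matrix.toEuclideanLin (lapR X)) μ)
        (WithLp.toLp 2 (Pi.single w 1))).2
    exact hz
  have h1 : eigProj X μ *ᵥ Pi.single w 1 = 0 := by rw [this]; exact congrArg WithLp.ofLp h0
  have h2 := congrFun h1 v
  simpa [Matrix.mulVec_single_one] using h2

lemma phiMinus_finite (a b : V) : (PhiMinus X a b).Finite := by
  apply Set.Finite.subset (Module.End.finite_hasEigenvalue (Matrix.toEuclideanLin (lapR X)))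
  intro μ hμ
  by_contra h
  have := eigProj_eq_zero_of_not_hasEigenvalue X μ h
  exact hμ.2 (by rw [this, Matrix.zero_mulVec])

lemma annihilate (a b : V) (hsc : StronglyCospectral X a b) (q : Polynomial ℝ)
    (hq : ∀ μ ∈ PhiMinus X a b, q.eval μ = 0) :
    (Polynomial.aeval (lapR X)) q *ᵥ Pi.single a 1 =
      (Polynomial.aeval (lapR X)) q *ᵥ Pi.single b 1 := by
  have key : ∀ w : V → ℝ, w = Pi.single a 1 - Pi.single b 1 →
      (Polynomial.aeval (lapR X)) q *ᵥ w = 0 := by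
    intro w hw
    apply allProjZero
    intro μ
    rw [Matrix.mulVec_mulVec, eigProj_mul_aeval, Matrix.smul_mulVec]
    by_cases hμ : μ ∈ PhiMinus X a b
    · rw [hq μ hμ, zero_smul]
    · have hPw : eigProj X μ *ᵥ w = 0 := by
        rw [hw, Matrix.mulVec_sub]
        rcases hsc μ with h | h
        · rw [h, sub_self]
        · have ha0 : eigProj X μ *ᵥ Pi.single a 1 = 0 := by
            by_contra hne
            exact hμ ⟨h, hne⟩
          have hb0 : eigProj X μ *ᵥ Pi.single b 1 = 0 := by
            have := h; rw [ha0] at this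
            simpa using this.symm
          rw [ha0, hb0, sub_self]
      rw [hPw, smul_zero]
  have := key _ rfl
  rw [Matrix.mulVec_sub, sub_eq_zero] at this
  exact this

lemma lapR_apply_of_adj {v w : V} (h : X.Adj v w) : lapR X v w = -1 := by
  letI := Classical.decRel X.Adj
  show (X.lapMatrix ℝ) v w = -1
  rw [SimpleGraph.lapMatrix, Matrix.sub_apply, SimpleGraph.degMatrix,
    Matrix.diagonal_apply_ne _ h.ne, SimpleGraph.adjMatrix_apply, if_pos h]
  ring

lemma lapR_apply_of_not_adj {v w : V} (hne : v ≠ w) (h : ¬ X.Adj v w) : lapR X v w = 0 := by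
  letI := Classical.decRel X.Adj
  show (X.lapMatrix ℝ) v w = 0
  rw [SimpleGraph.lapMatrix, Matrix.sub_apply, SimpleGraph.degMatrix,
    Matrix.diagonal_apply_ne _ hne, SimpleGraph.adjMatrix_apply, if_neg h]
  ring

omit [Fintype V] [DecidableEq V] in
lemma dist_le_succ_of_adj (hconn : X.Connected) {v u w : V} (h : X.Adj v u) :
    X.dist v w ≤ X.dist u w + 1 := by
  have h1 : X.dist v u ≤ 1 := by
    have := SimpleGraph.dist_le (SimpleGraph.Walk.cons h SimpleGraph.Walk.nil)
    simpa using this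
  have := hconn.dist_triangle (u := v) (v := u) (w := w)
  omega

lemma pow_apply_eq_zero (hconn : X.Connected) :
    ∀ (j : ℕ) (v w : V), j < X.dist v w → ((lapR X) ^ j) v w = 0 := by
  intro j
  induction j with
  | zero =>
    intro v w h
    have hne : v ≠ w := by rintro rfl; simp [SimpleGraph.dist_self] at h
    simp [Matrix.one_apply_ne hne]
  | succ j ih =>
    intro v w h
    rw [pow_succ', Matrix.mul_apply]
    apply Finset.sum_eq_zero
    intro u _
    by_cases huv : u = v
    · subst huv
      rw [ih u w (by omega), mul_zero]
    by_cases hadj : X.Adj v u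
    · have hd : j < X.dist u w := by
        have := dist_le_succ_of_adj X hconn hadj (w := w)
        omega
      rw [ih u w hd, mul_zero]
    · rw [lapR_apply_of_not_adj X (Ne.symm huv) hadj, zero_mul]

lemma pow_apply_pos (hconn : X.Connected) :
    ∀ (j : ℕ) (v w : V), X.dist v w = j → 0 < (-1 : ℝ) ^ j * ((lapR X) ^ j) v w := by
  intro j
  induction j with
  | zero =>
    intro v w h
    have : v = w := (hconn.dist_eq_zero_iff).mp h
    subst this
    simp
  | succ j ih =>
    intro v w h
    obtain ⟨p, hp⟩ := (hconn.preconnected v w).exists_walk_length_eq_dist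
    rw [h] at hp
    cases p with
    | nil => simp at hp
    | cons hadj q =>
      rename_i u
      have hq : q.length = j := by simpa using hp
      have hdu : X.dist u w = j := by
        have h1 : X.dist u w ≤ j := hq ▸ SimpleGraph.dist_le q
        have h2 := dist_le_succ_of_adj X hconn hadj (w := w)
        omega
      have hm : ((lapR X) ^ (j + 1)) v w = ∑ x, lapR X v x * ((lapR X) ^ j) x w := by
        rw [pow_succ', Matrix.mul_apply]
      rw [hm, Finset.mul_sum]
      apply Finset.sum_pos'
      · intro x _
        by_cases hxv : x = v
        · rw [hxv, pow_apply_eq_zero X hconn j v w (by omega), mul_zero, mul_zero]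
        by_cases hadjx : X.Adj v x
        · have hdx : j ≤ X.dist x w := by
            have := dist_le_succ_of_adj X hconn hadjx (w := w); omega
          rcases eq_or_lt_of_le hdx with he | hl
          · have := ih x w he.symm
            rw [lapR_apply_of_adj X hadjx, pow_succ]
            nlinarith
          · rw [pow_apply_eq_zero X hconn j x w hl, mul_zero, mul_zero]
        · rw [lapR_apply_of_not_adj X (Ne.symm hxv) hadjx, zero_mul, mul_zero]
      · refine ⟨u, Finset.mem_univ u, ?_⟩
        have := ih u w hdu
        rw [lapR_apply_of_adj X hadj, pow_succ]
        nlinarith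

omit [Fintype V] [DecidableEq V] in
lemma exists_intermediate (hconn : X.Connected) :
    ∀ (k d : ℕ), k ≤ d → ∀ a b : V, X.dist a b = d →
      ∃ v : V, X.dist a v = k ∧ X.dist v b ≤ d - k := by
  intro k
  induction k with
  | zero => intro d _ a b hd; exact ⟨a, SimpleGraph.dist_self, by omega⟩
  | succ k ih =>
    intro d hkd a b hd
    obtain ⟨v, hav, hvb⟩ := ih d (by omega) a b hd
    have htri := hconn.dist_triangle (u := a) (v := v) (w := b)
    have hvb' : X.dist v b = d - k := by omega
    have hne : v ≠ b := by
      intro h; subst h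
      rw [SimpleGraph.dist_self] at hvb'; omega
    obtain ⟨p, hp⟩ := (hconn.preconnected v b).exists_walk_length_eq_dist
    rw [hvb'] at hp
    cases p with
    | nil => simp at hp; omega
    | cons hadj q =>
      rename_i u
      have hq : q.length = d - k - 1 := by simp at hp; omega
      have hub : X.dist u b ≤ d - (k + 1) := by
        have := hq ▸ SimpleGraph.dist_le q; omega
      refine ⟨u, ?_, hub⟩
      have h1 : X.dist a u ≤ k + 1 := by
        have htr := hconn.dist_triangle (u := a) (v := v) (w := u)
        have : X.dist v u ≤ 1 := by
          have := SimpleGraph.dist_le (SimpleGraph.Walk.cons hadj SimpleGraph.Walk.nil)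
          simpa using this
        omega
      have h2 : k + 1 ≤ X.dist a u := by
        have htr := hconn.dist_triangle (u := a) (v := u) (w := b)
        omega
      omega

end Helpers

/-- If `|Φ⁻| = k` for strongly cospectral `a, b`, then every
vertex at distance exactly `k` from `a` is at distance at most `k` from `b`;
in particular `dist a b ≤ 2k`. -/
theorem phiMinus_card_dist {V : Type*} [Fintype V] [DecidableEq V]
    (X : SimpleGraph V) (hconn : X.Connected) (a b : V)
    (hsc : StronglyCospectral X a b) (k : ℕ) (hk : (PhiMinus X a b).ncard = k) :
    (∀ v : V, X.dist a v = k → X.dist b v ≤ k) ∧ X.dist a b ≤ 2 * k := by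
  classical
  have hfin := phiMinus_finite X a b
  have hcard : hfin.toFinset.card = k := by
    rw [← Set.ncard_eq_toFinset_card _ hfin, hk]
  set q : Polynomial ℝ := ∏ μ ∈ hfin.toFinset, (Polynomial.X - Polynomial.C μ) with hqdef
  have hmonic : q.Monic :=
    Polynomial.monic_prod_of_monic _ _ fun μ _ => Polynomial.monic_X_sub_C μ
  have hdeg : q.natDegree = k := by
    rw [hqdef, Polynomial.natDegree_prod _ _ (fun μ _ => Polynomial.X_sub_C_ne_zero μ)]
    simp [Polynomial.natDegree_X_sub_C, hcard]
  have hroot : ∀ μ ∈ PhiMinus X a b, q.eval μ = 0 := by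
    intro μ hμ
    rw [hqdef, Polynomial.eval_prod]
    apply Finset.prod_eq_zero (hfin.mem_toFinset.mpr hμ)
    simp
  have hann := annihilate X a b hsc q hroot
  have hentry : ∀ (c v : V), ((Polynomial.aeval (lapR X)) q *ᵥ Pi.single c 1) v
      = ∑ i ∈ Finset.range (k + 1), q.coeff i * ((lapR X) ^ i) v c := by
    intro c v
    rw [Polynomial.aeval_eq_sum_range, hdeg]
    have hrw : ((∑ i ∈ Finset.range (k + 1), q.coeff i • (lapR X) ^ i) *ᵥ Pi.single c 1) v
        = (∑ i ∈ Finset.range (k + 1), q.coeff i • (lapR X) ^ i) v c := by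
      rw [Matrix.mulVec_single_one]; rfl
    rw [hrw, Matrix.sum_apply]
    refine Finset.sum_congr rfl fun i _ => ?_
    rw [Matrix.smul_apply, smul_eq_mul]
  have part1 : ∀ v : V, X.dist a v = k → X.dist b v ≤ k := by
    intro v hv
    by_contra hbv
    push_neg at hbv
    have hva : X.dist v a = k := by rw [SimpleGraph.dist_comm]; exact hv
    have hvb : k < X.dist v b := by rw [SimpleGraph.dist_comm]; exact hbv
    have e1 : ((Polynomial.aeval (lapR X)) q *ᵥ Pi.single a 1) v = ((lapR X) ^ k) v a := by
      rw [hentry, Finset.sum_range_succ]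
      have hz : ∀ i ∈ Finset.range k, q.coeff i * ((lapR X) ^ i) v a = 0 := by
        intro i hi
        rw [pow_apply_eq_zero X hconn i v a
          (by rw [hva]; exact Finset.mem_range.mp hi), mul_zero]
      rw [Finset.sum_eq_zero hz, zero_add, ← hdeg, hmonic.coeff_natDegree, one_mul]
    have e2 : ((Polynomial.aeval (lapR X)) q *ᵥ Pi.single b 1) v = 0 := by
      rw [hentry]
      apply Finset.sum_eq_zero
      intro i hi
      rw [pow_apply_eq_zero X hconn i v b
        (by have := Finset.mem_range.mp hi; omega), mul_zero]
    have hne : ((lapR X) ^ k) v a ≠ 0 := by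
      intro h0
      have := pow_apply_pos X hconn k v a hva
      rw [h0, mul_zero] at this
      exact lt_irrefl _ this
    rw [hann, e2] at e1
    exact hne e1.symm
  refine ⟨part1, ?_⟩
  by_cases hd : X.dist a b ≤ k
  · omega
  · push_neg at hd
    obtain ⟨v, hav, hvb⟩ :=
      exists_intermediate X hconn k (X.dist a b) (by omega) a b rfl
    have hbv := part1 v hav
    have htri := hconn.dist_triangle (u := a) (v := v) (w := b)
    have hcomm : X.dist v b = X.dist b v := SimpleGraph.dist_comm
    omega
end

section
/- Let X be a finite simple graph admitting proper Laplacian fractional revival between distinct vertices a and b at time τ. Then a and b are Laplacian strongly cospectral, and the function μ ↦ e^{iτμ} is constant on Φ⁺ and constant on Φ⁻; that is, for all μ, ν both in Φ⁺, or both in Φ⁻, one has exp(iτμ) = exp(iτν). -/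
open Matrix

section Aux

set_option linter.unusedSectionVars false

variable {V : Type*} [Fintype V] [DecidableEq V] (G : SimpleGraph V) (μ : ℝ)

lemma toEuclideanLin_eigProj :
    Matrix.toEuclideanLin (eigProj G μ) =
      ((Module.End.eigenspace (Matrix.toEuclideanLin (lapR G)) μ).subtype ∘ₗ
      (Submodule.orthogonalProjectionOnto
        (Module.End.eigenspace (Matrix.toEuclideanLin (lapR G)) μ) :
          EuclideanSpace ℝ V →L[ℝ] _).toLinearMap) := by
  simp [eigProj]

lemma eigProj_mulVec_mem (v : V → ℝ) :
    (WithLp.equiv 2 (V → ℝ)).symm (eigProj G μ *ᵥ v) ∈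
      Module.End.eigenspace (Matrix.toEuclideanLin (lapR G)) μ := by
  have h : Matrix.toEuclideanLin (eigProj G μ) ((WithLp.equiv 2 (V → ℝ)).symm v)
      = (WithLp.equiv 2 (V → ℝ)).symm (eigProj G μ *ᵥ v) := by
    exact Matrix.toEuclideanLin_apply_piLp_toLp _ _
  rw [← h, toEuclideanLin_eigProj]
  exact Submodule.coe_mem _

lemma lapR_mulVec_eigProj (v : V → ℝ) :
    lapR G *ᵥ (eigProj G μ *ᵥ v) = μ • (eigProj G μ *ᵥ v) := by
  have h := Module.End.mem_eigenspace_iff.mp (eigProj_mulVec_mem G μ v)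
  have h2 : Matrix.toEuclideanLin (lapR G) ((WithLp.equiv 2 (V → ℝ)).symm (eigProj G μ *ᵥ v))
      = (WithLp.equiv 2 (V → ℝ)).symm (lapR G *ᵥ (eigProj G μ *ᵥ v)) :=
    Matrix.toEuclideanLin_apply_piLp_toLp _ _
  rw [h2] at h
  have := congrArg (WithLp.equiv 2 (V → ℝ)) h
  simpa using this

lemma eigProj_fixes {x : V → ℝ} (hx : lapR G *ᵥ x = μ • x) :
    eigProj G μ *ᵥ x = x := by
  have hmem : (WithLp.equiv 2 (V → ℝ)).symm x ∈
      Module.End.eigenspace (Matrix.toEuclideanLin (lapR G)) μ := by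
    rw [Module.End.mem_eigenspace_iff]
    have h2 : Matrix.toEuclideanLin (lapR G) ((WithLp.equiv 2 (V → ℝ)).symm x)
        = (WithLp.equiv 2 (V → ℝ)).symm (lapR G *ᵥ x) :=
      Matrix.toEuclideanLin_apply_piLp_toLp _ _
    rw [h2, hx]
    exact (LinearEquiv.map_smul (WithLp.linearEquiv 2 ℝ (V → ℝ)).symm μ x)
  have h : Matrix.toEuclideanLin (eigProj G μ) ((WithLp.equiv 2 (V → ℝ)).symm x)
      = (WithLp.equiv 2 (V → ℝ)).symm (eigProj G μ *ᵥ x) :=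
    Matrix.toEuclideanLin_apply_piLp_toLp _ _
  rw [toEuclideanLin_eigProj] at h
  simp only [LinearMap.coe_comp, Function.comp_apply, ContinuousLinearMap.coe_coe,
    Submodule.coe_subtype] at h
  rw [show ((Submodule.orthogonalProjectionOnto _ ((WithLp.equiv 2 (V → ℝ)).symm x)) : EuclideanSpace ℝ V) = (WithLp.equiv 2 (V → ℝ)).symm x from Submodule.starProjection_eq_self_iff.mpr hmem] at h
  exact ((WithLp.equiv 2 (V → ℝ)).symm.injective h).symm

lemma eigProj_isSymm : (eigProj G μ)ᵀ = eigProj G μ := by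
  have h : (eigProj G μ).IsHermitian := by
    rw [Matrix.isHermitian_iff_isSymmetric, toEuclideanLin_eigProj]
    intro x y
    exact Submodule.starProjection_isSymmetric _ x y
  simpa [Matrix.IsHermitian, Matrix.conjTranspose_eq_transpose_of_trivial] using h

lemma lapR_isSymm_s8 : (lapR G)ᵀ = lapR G := by
  letI := Classical.decRel G.Adj
  exact G.isSymm_lapMatrix (R := ℝ)

lemma lapR_mul_eigProj : lapR G * eigProj G μ = μ • eigProj G μ := by
  ext i j
  have := congrFun (lapR_mulVec_eigProj G μ (Pi.single j 1)) i
  simpa [Matrix.mul_apply, Matrix.mulVec, dotProduct, Pi.single_apply] using this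

lemma eigProj_mul_lapR : eigProj G μ * lapR G = μ • eigProj G μ := by
  have h := congrArg Matrix.transpose (lapR_mul_eigProj G μ)
  rwa [Matrix.transpose_mul, Matrix.transpose_smul, eigProj_isSymm, lapR_isSymm_s8] at h

/-- key exp lemma -/
lemma mul_exp_of_mul_eq_smul {n : Type*} [Fintype n] [DecidableEq n]
    (P A : Matrix n n ℂ) (z : ℂ) (h : P * A = z • P) :
    P * NormedSpace.exp A = Complex.exp z • P := by
  letI : SeminormedRing (Matrix n n ℂ) := Matrix.linftyOpSemiNormedRing
  letI : NormedRing (Matrix n n ℂ) := Matrix.linftyOpNormedRing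
  letI : NormedAlgebra ℂ (Matrix n n ℂ) := Matrix.linftyOpNormedAlgebra
  have hpow : ∀ k : ℕ, P * A ^ k = z ^ k • P := by
    intro k
    induction k with
    | zero => simp
    | succ k ih =>
      rw [pow_succ, ← mul_assoc, ih, Matrix.smul_mul, h, smul_smul, pow_succ]
  have h1 : HasSum (fun k : ℕ => ((Nat.factorial k : ℂ))⁻¹ • A ^ k) (NormedSpace.exp A) :=
    NormedSpace.exp_series_hasSum_exp' A
  have h2 := h1.mapL (ContinuousLinearMap.mul ℂ (Matrix n n ℂ) P)
  simp only [ContinuousLinearMap.mul_apply', Matrix.mul_smul, hpow, smul_smul] at h2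
  have h3 : HasSum (fun k : ℕ => ((Nat.factorial k : ℂ))⁻¹ * z ^ k) (Complex.exp z) := by
    rw [Complex.exp_eq_exp_ℂ]
    simpa using NormedSpace.exp_series_hasSum_exp' (𝕂 := ℂ) z
  have h4 := h3.mapL ((1 : ℂ →L[ℂ] ℂ).smulRight P)
  simp only [ContinuousLinearMap.smulRight_apply, ContinuousLinearMap.one_apply] at h4
  exact h2.unique h4

def cxv (x : V → ℝ) : V → ℂ := fun i => (x i : ℂ)


lemma cxv_inj {x y : V → ℝ} (h : cxv x = cxv y) : x = y := by
  funext i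
  exact Complex.ofReal_inj.mp (congrFun h i)

lemma cxv_eq_zero {x : V → ℝ} : cxv x = 0 ↔ x = 0 := by
  constructor
  · intro h; funext i
    exact Complex.ofReal_eq_zero.mp (congrFun h i)
  · rintro rfl; funext i; simp [cxv]

lemma cxv_smul (c : ℝ) (x : V → ℝ) : cxv (c • x) = (c : ℂ) • cxv x := by
  funext i; simp [cxv]

lemma cxv_single (a : V) : (Pi.single a 1 : V → ℂ) = cxv (Pi.single a 1) := by
  funext i
  by_cases h : i = a <;> simp [cxv, Pi.single_apply, h]

lemma map_mulVec_cxv (M : Matrix V V ℝ) (x : V → ℝ) :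
    M.map Complex.ofReal *ᵥ cxv x = cxv (M *ᵥ x) := by
  funext i
  simp [Matrix.mulVec, dotProduct, cxv]


lemma eigProjC_mul_lapC :
    (eigProj G μ).map Complex.ofReal * lapC G = (μ : ℂ) • (eigProj G μ).map Complex.ofReal := by
  have h : ((eigProj G μ * lapR G).map Complex.ofReal : Matrix V V ℂ)
      = ((μ • eigProj G μ : Matrix V V ℝ).map Complex.ofReal) := by
    rw [eigProj_mul_lapR]
  rw [show ((eigProj G μ * lapR G).map Complex.ofReal : Matrix V V ℂ)
      = (eigProj G μ).map Complex.ofReal * (lapR G).map Complex.ofReal from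
    Matrix.map_mul (f := Complex.ofRealHom)] at h
  rw [lapC]
  rw [h]
  ext i j
  simp

lemma eigProjC_mul_transition (τ : ℝ) :
    (eigProj G μ).map Complex.ofReal * transition G τ =
      Complex.exp (Complex.I * τ * μ) • (eigProj G μ).map Complex.ofReal := by
  rw [transition]
  apply mul_exp_of_mul_eq_smul
  rw [Matrix.mul_smul, eigProjC_mul_lapC, smul_smul]

lemma star_identity {a b : V} {τ : ℝ} {α β : ℂ}
    (heq : transition G τ *ᵥ Pi.single a 1 =
      α • (Pi.single a 1 : V → ℂ) + β • (Pi.single b 1 : V → ℂ)) :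
    Complex.exp (Complex.I * τ * μ) • cxv (eigProj G μ *ᵥ Pi.single a 1) =
      α • cxv (eigProj G μ *ᵥ Pi.single a 1) + β • cxv (eigProj G μ *ᵥ Pi.single b 1) := by
  have h1 : (eigProj G μ).map Complex.ofReal *ᵥ (transition G τ *ᵥ (Pi.single a 1 : V → ℂ))
      = ((eigProj G μ).map Complex.ofReal * transition G τ) *ᵥ (Pi.single a 1 : V → ℂ) :=
    Matrix.mulVec_mulVec (Pi.single a 1) ((eigProj G μ).map Complex.ofReal) (transition G τ)
  rw [heq, eigProjC_mul_transition, Matrix.smul_mulVec] at h1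
  rw [Matrix.mulVec_add, Matrix.mulVec_smul, Matrix.mulVec_smul] at h1
  rw [cxv_single a, cxv_single b, map_mulVec_cxv, map_mulVec_cxv] at h1
  exact h1.symm

lemma lapC_conjTranspose : (lapC G)ᴴ = lapC G := by
  ext i j
  simp only [lapC, Matrix.conjTranspose_apply, Matrix.map_apply, Complex.star_def,
    Complex.conj_ofReal]
  exact congrArg Complex.ofReal (congrFun (congrFun (lapR_isSymm_s8 G) i) j)

lemma transition_conjTranspose_mul (τ : ℝ) :
    (transition G τ)ᴴ * transition G τ = 1 := by
  have hA : ((Complex.I * (τ : ℂ)) • lapC G)ᴴ = -((Complex.I * (τ : ℂ)) • lapC G) := by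
    rw [Matrix.conjTranspose_smul, lapC_conjTranspose]
    rw [show star (Complex.I * (τ : ℂ)) = -(Complex.I * (τ : ℂ)) by
      simp [Complex.star_def, Complex.conj_ofReal]]
    rw [neg_smul]
  rw [transition, ← Matrix.exp_conjTranspose, hA]
  rw [← Matrix.exp_add_of_commute (-((Complex.I * (τ : ℂ)) • lapC G)) _ (Commute.neg_left (Commute.refl _))]
  rw [neg_add_cancel]
  exact NormedSpace.exp_zero

lemma norm_coeffs {a b : V} {τ : ℝ} {α β : ℂ} (hab : a ≠ b)
    (heq : transition G τ *ᵥ Pi.single a 1 =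
      α • (Pi.single a 1 : V → ℂ) + β • (Pi.single b 1 : V → ℂ)) :
    star α * α + star β * β = 1 := by
  set U := transition G τ
  have h1 : star (U *ᵥ Pi.single a 1) ⬝ᵥ (U *ᵥ Pi.single a 1) = 1 := by
    rw [Matrix.star_mulVec, Matrix.dotProduct_mulVec, Matrix.vecMul_vecMul,
      transition_conjTranspose_mul, Matrix.vecMul_one]
    simp [single_dotProduct, Pi.single_star]
  rw [heq] at h1
  simpa [star_add, star_smul, add_dotProduct, dotProduct_add,
    smul_dotProduct, dotProduct_smul, Pi.single_star,
    single_dotProduct, Pi.single_apply, hab, Ne.symm hab, smul_eq_mul,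
    mul_comm, mul_assoc, mul_left_comm] using h1

open Classical in
noncomputable def ind (G : SimpleGraph V) (a : V) : V → ℝ :=
  fun v => if G.Reachable a v then 1 else 0

lemma lapR_mulVec_ind (a : V) : lapR G *ᵥ ind G a = 0 := by
  classical
  have hL : lapR G = G.lapMatrix ℝ := by
    rw [lapR]
  funext v
  rw [hL, SimpleGraph.lapMatrix_mulVec_apply, Pi.zero_apply, sub_eq_zero]
  have hsum : ∑ u ∈ G.neighborFinset v, ind G a u
      = ∑ u ∈ G.neighborFinset v, ind G a v := by
    apply Finset.sum_congr rfl
    intro u hu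
    rw [SimpleGraph.mem_neighborFinset] at hu
    have hiff : G.Reachable a u ↔ G.Reachable a v :=
      ⟨fun h => h.trans hu.symm.reachable, fun h => h.trans hu.reachable⟩
    simp only [ind]
    rw [if_congr hiff rfl rfl]
  rw [hsum, Finset.sum_const, SimpleGraph.card_neighborFinset_eq_degree, nsmul_eq_mul]

lemma eigProj_zero_fixes_ind (a : V) : eigProj G 0 *ᵥ ind G a = ind G a :=
  eigProj_fixes G 0 (by rw [lapR_mulVec_ind]; simp)

lemma ind_dot_eigProj_zero (a : V) (y : V → ℝ) :
    ind G a ⬝ᵥ (eigProj G 0 *ᵥ y) = ind G a ⬝ᵥ y := by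
  rw [Matrix.dotProduct_mulVec]
  have h : ind G a ᵥ* eigProj G 0 = ind G a := by
    rw [← Matrix.mulVec_transpose, eigProj_isSymm]
    exact eigProj_zero_fixes_ind G a
  rw [h]

lemma cxv_dot (x y : V → ℝ) : cxv x ⬝ᵥ cxv y = ((x ⬝ᵥ y : ℝ) : ℂ) := by
  simp [dotProduct, cxv]

lemma alpha_add_beta {a b : V} {τ : ℝ} {α β : ℂ} (hβ : β ≠ 0)
    (heq : transition G τ *ᵥ Pi.single a 1 =
      α • (Pi.single a 1 : V → ℂ) + β • (Pi.single b 1 : V → ℂ)) :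
    α + β = 1 := by
  classical
  have h0 := star_identity G 0 heq
  rw [show Complex.I * (τ : ℂ) * ((0:ℝ) : ℂ) = 0 by simp, Complex.exp_zero, one_smul] at h0
  set pa := eigProj G 0 *ᵥ Pi.single a 1 with hpa
  set pb := eigProj G 0 *ᵥ Pi.single b 1 with hpb
  have pair : ∀ z : V, cxv (ind G z) ⬝ᵥ cxv pa = ((ind G z a : ℝ) : ℂ) ∧
      cxv (ind G z) ⬝ᵥ cxv pb = ((ind G z b : ℝ) : ℂ) := by
    intro z
    constructor
    · rw [cxv_dot, hpa, ind_dot_eigProj_zero, dotProduct_single, mul_one]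
    · rw [cxv_dot, hpb, ind_dot_eigProj_zero, dotProduct_single, mul_one]
  have hA := congrArg (fun w => cxv (ind G a) ⬝ᵥ w) h0
  have hB := congrArg (fun w => cxv (ind G b) ⬝ᵥ w) h0
  simp only [dotProduct_add, dotProduct_smul, smul_eq_mul] at hA hB
  rw [(pair a).1, (pair a).2] at hA
  rw [(pair b).1, (pair b).2] at hB
  have haa : ind G a a = 1 := by
    simp only [ind]; rw [if_pos (SimpleGraph.Reachable.refl a)]
  have hbb : ind G b b = 1 := by
    simp only [ind]; rw [if_pos (SimpleGraph.Reachable.refl b)]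
  by_cases hr : G.Reachable a b
  · have hab1 : ind G a b = 1 := by simp [ind, hr]
    rw [haa, hab1] at hA
    push_cast at hA
    linear_combination -hA
  · have hab0 : ind G a b = 0 := by simp [ind, hr]
    have hba0 : ind G b a = 0 := by
      simp only [ind]
      rw [if_neg (fun hh : G.Reachable b a => hr hh.symm)]
    rw [haa, hab0] at hA
    rw [hbb, hba0] at hB
    push_cast at hA hB
    exfalso
    exact hβ (by linear_combination -hB)

lemma exists_c {a b : V} {τ : ℝ} {α β : ℂ} (hβ : β ≠ 0) (μ : ℝ)
    (heq : transition G τ *ᵥ Pi.single a 1 =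
      α • (Pi.single a 1 : V → ℂ) + β • (Pi.single b 1 : V → ℂ))
    (hne : eigProj G μ *ᵥ Pi.single a 1 ≠ 0) :
    ∃ c : ℝ, eigProj G μ *ᵥ Pi.single b 1 = c • (eigProj G μ *ᵥ Pi.single a 1) ∧
      Complex.exp (Complex.I * τ * μ) = α + β * c := by
  have hstar := star_identity G μ heq
  set pa := eigProj G μ *ᵥ Pi.single a 1 with hpa
  set pb := eigProj G μ *ᵥ Pi.single b 1 with hpb
  set e := Complex.exp (Complex.I * τ * μ) with he
  obtain ⟨v0, hv0⟩ : ∃ v0, pa v0 ≠ 0 := by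
    by_contra hcon
    push_neg at hcon
    exact hne (funext fun v => hcon v)
  have hcomp : ∀ v : V, e * (pa v : ℂ) = α * pa v + β * pb v := by
    intro v
    have := congrFun hstar v
    simpa [cxv, Pi.smul_apply, smul_eq_mul] using this
  refine ⟨pb v0 / pa v0, ?_, ?_⟩
  · funext v
    have h1 := hcomp v
    have h2 := hcomp v0
    have hv0' : (pa v0 : ℂ) ≠ 0 := by exact_mod_cast hv0
    -- from h2 : e = α + β * (pb v0 / pa v0)
    have hec : e * pa v0 - α * pa v0 = β * pb v0 := by linear_combination h2
    -- componentwise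
    have h3 : β * ((pb v0 : ℂ) * pa v - (pa v0 : ℂ) * pb v) = 0 := by
      linear_combination (pa v0 : ℂ) * h1 - (pa v : ℂ) * h2
    have h4 : (pb v0 : ℂ) * pa v - (pa v0 : ℂ) * pb v = 0 :=
      by exact (mul_eq_zero.mp h3).resolve_left hβ
    have h5 : (pb v0 : ℝ) * pa v - (pa v0 : ℝ) * pb v = 0 := by exact_mod_cast h4
    have : pb v = (pb v0 / pa v0) * pa v := by
      field_simp
      linarith [h5]
    simpa [Pi.smul_apply, smul_eq_mul] using this
  · have h2 := hcomp v0
    have hv0' : (pa v0 : ℂ) ≠ 0 := by exact_mod_cast hv0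
    have hcast : ((pb v0 / pa v0 : ℝ) : ℂ) = (pb v0 : ℂ) / (pa v0 : ℂ) := by push_cast; ring
    rw [hcast]
    field_simp
    linear_combination h2

lemma c_pm_one {τ μ : ℝ} {α β : ℂ} (h1 : star α * α + star β * β = 1)
    (h2 : α + β = 1) (hβ : β ≠ 0) {c : ℝ}
    (h3 : Complex.exp (Complex.I * τ * μ) = α + β * c) :
    c = 1 ∨ c = -1 := by
  have habs : star (α + β * (c : ℂ)) * (α + β * (c : ℂ)) = 1 := by
    rw [← h3]
    rw [show star (Complex.exp (Complex.I * τ * μ)) =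
        Complex.exp (-(Complex.I * τ * μ)) by
      rw [Complex.star_def, ← Complex.exp_conj]
      congr 1
      simp [Complex.conj_ofReal]]
    rw [← Complex.exp_add, neg_add_cancel, Complex.exp_zero]
  have hα : α = 1 - β := by linear_combination h2
  have hsα : star α = 1 - star β := by rw [hα]; rw [star_sub, star_one]
  have hstarc : star ((c : ℂ)) = (c : ℂ) := by
    rw [Complex.star_def, Complex.conj_ofReal]
  have hst : star (α + β * (c : ℂ)) = star α + star β * (c : ℂ) := by
    rw [star_add, star_mul', hstarc]
  rw [hst, hsα, hα] at habs
  rw [hα] at h1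
  rw [show star (1 - β) = 1 - star β by rw [star_sub, star_one]] at h1
  -- h1 : (1 - star β) * (1 - β) + star β * β = 1
  have hsum : star β + β = 2 * (star β * β) := by linear_combination -h1
  have key : ((c : ℂ) ^ 2 - 1) * (star β * β) = 0 := by
    linear_combination habs - ((c : ℂ) - 1) * hsum
  have hββ : star β * β ≠ 0 := mul_ne_zero (star_ne_zero.mpr hβ) hβ
  have hc2 : ((c : ℂ)) ^ 2 = 1 := by
    have := (mul_eq_zero.mp key).resolve_right hββ
    linear_combination this
  have hc2r : c ^ 2 = 1 := by exact_mod_cast hc2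
  have : (c - 1) * (c + 1) = 0 := by linear_combination hc2r
  rcases mul_eq_zero.mp this with h | h
  · left; linarith
  · right; linarith

lemma exp_eq_of_rel {a b : V} {τ : ℝ} {α β : ℂ}
    (heq : transition G τ *ᵥ Pi.single a 1 =
      α • (Pi.single a 1 : V → ℂ) + β • (Pi.single b 1 : V → ℂ))
    (μ : ℝ) (s : ℝ)
    (hrel : eigProj G μ *ᵥ Pi.single b 1 = s • (eigProj G μ *ᵥ Pi.single a 1))
    (hne : eigProj G μ *ᵥ Pi.single a 1 ≠ 0) :
    Complex.exp (Complex.I * τ * μ) = α + β * s := by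
  have hstar := star_identity G μ heq
  rw [hrel, cxv_smul] at hstar
  have h2 : (Complex.exp (Complex.I * τ * μ) - (α + β * s)) •
      cxv (eigProj G μ *ᵥ Pi.single a 1) = 0 := by
    rw [sub_smul, hstar]
    module
  rcases smul_eq_zero.mp h2 with h | h
  · linear_combination h
  · exact absurd (cxv_eq_zero.mp h) hne

end Aux

/-- Under proper LaFR between `a` and `b` at time `τ`, `a` and
`b` are strongly cospectral and `μ ↦ e^{iτμ}` is constant on `Φ⁺` and on `Φ⁻`. -/
theorem properLaFR_exp_constant {V : Type*} [Fintype V] [DecidableEq V]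
    (X : SimpleGraph V) (a b : V) (τ : ℝ) (h : properLaFR X a b τ) :
    StronglyCospectral X a b ∧
    ∀ μ ν : ℝ,
      ((μ ∈ PhiPlus X a b ∧ ν ∈ PhiPlus X a b) ∨
        (μ ∈ PhiMinus X a b ∧ ν ∈ PhiMinus X a b)) →
      Complex.exp (Complex.I * τ * μ) = Complex.exp (Complex.I * τ * ν) := by
  obtain ⟨hab, α, β, hβ, heq⟩ := h
  have hnorm := norm_coeffs X hab heq
  have hsumab := alpha_add_beta X hβ heq
  constructor
  · intro μ
    by_cases hne : eigProj X μ *ᵥ Pi.single a 1 = 0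
    · left
      have hstar := star_identity X μ heq
      rw [hne, show cxv (0 : V → ℝ) = 0 from cxv_eq_zero.mpr rfl] at hstar
      have hz : β • cxv (eigProj X μ *ᵥ Pi.single b 1) = 0 := by
        have := hstar.symm
        simpa using this
      have hb0 : cxv (eigProj X μ *ᵥ Pi.single b 1) = 0 :=
        (smul_eq_zero.mp hz).resolve_left hβ
      rw [hne, cxv_eq_zero.mp hb0]
    · obtain ⟨c, hvec, hexp⟩ := exists_c X hβ μ heq hne
      rcases c_pm_one hnorm hsumab hβ hexp with hc | hc
      · left
        rw [hc] at hvec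
        rw [hvec, one_smul]
      · right
        rw [hc] at hvec
        rw [hvec]
        module
  · rintro μ ν (⟨⟨hμe, hμn⟩, ⟨hνe, hνn⟩⟩ | ⟨⟨hμe, hμn⟩, ⟨hνe, hνn⟩⟩)
    · rw [exp_eq_of_rel X heq μ 1 (by rw [one_smul]; exact hμe.symm) hμn,
        exp_eq_of_rel X heq ν 1 (by rw [one_smul]; exact hνe.symm) hνn]
    · rw [exp_eq_of_rel X heq μ (-1) (by rw [neg_one_smul, hμe, neg_neg]) hμn,
        exp_eq_of_rel X heq ν (-1) (by rw [neg_one_smul, hνe, neg_neg]) hνn]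
end

section
/- Let T be a finite tree (a connected acyclic simple graph) with Laplacian matrix L. Let μ be an integer eigenvalue of L and let x be an eigenvector of L for μ all of whose entries are integers. Then for any two vertices u and v of T, μ divides x_u − x_v. -/
open Matrix

theorem edge_dvd_aux {V : Type*} [Fintype V] [DecidableEq V]
    (T : SimpleGraph V) [DecidableRel T.Adj] (ht : T.IsTree)
    (μ : ℤ) (x : V → ℤ)
    (key : ∀ u, (T.degree u : ℤ) * x u - ∑ w ∈ T.neighborFinset u, x w = μ * x u)
    {a b : V} (hab : T.Adj a b) : μ ∣ (x a - x b) := by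
  classical
  set f : V → V → ℤ := fun u w => if T.Adj u w then x u - x w else 0 with hf
  set S : Finset V := Finset.univ.filter
    (fun w => (T \ SimpleGraph.fromEdgeSet {s(a,b)}).Reachable w a) with hS
  have haS : a ∈ S := by simp [hS, SimpleGraph.Reachable.refl]
  have hbridge : ¬(T \ SimpleGraph.fromEdgeSet {s(a,b)}).Reachable a b := by
    have := (SimpleGraph.isAcyclic_iff_forall_adj_isBridge.mp ht.2) hab
    exact SimpleGraph.isBridge_iff.mp this
  have hbS : b ∉ S := by
    simp only [hS, Finset.mem_filter, Finset.mem_univ, true_and]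
    intro h
    exact hbridge h.symm
  have cross : ∀ u w, u ∈ S → w ∉ S → T.Adj u w → u = a ∧ w = b := by
    intro u w hu hw huw
    by_cases he : s(u, w) = s(a, b)
    · rcases Sym2.eq_iff.mp he with ⟨rfl, rfl⟩ | ⟨rfl, rfl⟩
      · exact ⟨rfl, rfl⟩
      · exact absurd hu hbS
    · exfalso
      apply hw
      simp only [hS, Finset.mem_filter, Finset.mem_univ, true_and] at hu ⊢
      refine SimpleGraph.Reachable.trans ?_ hu
      refine SimpleGraph.Adj.reachable ?_
      simp only [SimpleGraph.sdiff_adj, SimpleGraph.fromEdgeSet_adj, Set.mem_singleton_iff]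
      refine ⟨huw.symm, ?_⟩
      rintro ⟨h, -⟩
      exact he ((Sym2.eq_swap).trans h)
  -- each row sum as a sum of differences over all vertices
  have row : ∀ u, μ * x u = ∑ w, f u w := by
    intro u
    rw [← key u]
    have h1 : (T.degree u : ℤ) * x u = ∑ w, (if T.Adj u w then x u else 0) := by
      rw [show (∑ w, if T.Adj u w then x u else 0) = ∑ w ∈ T.neighborFinset u, x u by
        rw [SimpleGraph.neighborFinset_eq_filter, Finset.sum_filter]]
      rw [Finset.sum_const, nsmul_eq_mul, SimpleGraph.degree]
    have h2 : (∑ w ∈ T.neighborFinset u, x w) = ∑ w, (if T.Adj u w then x w else 0) := by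
      rw [SimpleGraph.neighborFinset_eq_filter, Finset.sum_filter]
    rw [h1, h2, ← Finset.sum_sub_distrib]
    apply Finset.sum_congr rfl
    intro w _
    by_cases h : T.Adj u w <;> simp [hf, h]
  -- sum the rows over S
  have total : μ * ∑ u ∈ S, x u = ∑ u ∈ S, ∑ w, f u w := by
    rw [Finset.mul_sum]
    exact Finset.sum_congr rfl fun u _ => row u
  have split : ∀ u, ∑ w, f u w = (∑ w ∈ S, f u w) + ∑ w ∈ Sᶜ, f u w := by
    intro u
    rw [Finset.sum_add_sum_compl]
  have anti : ∀ u w, f u w = - f w u := by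
    intro u w
    by_cases h : T.Adj u w
    · simp [hf, h, h.symm]
    · have h2 : ¬ T.Adj w u := fun h' => h h'.symm
      simp [hf, h, h2]
  have inner_zero : ∑ u ∈ S, ∑ w ∈ S, f u w = 0 := by
    have h1 : ∑ u ∈ S, ∑ w ∈ S, f u w = ∑ u ∈ S, ∑ w ∈ S, f w u := Finset.sum_comm
    have h2 : ∑ u ∈ S, ∑ w ∈ S, f w u = - ∑ u ∈ S, ∑ w ∈ S, f u w := by
      rw [← Finset.sum_neg_distrib]
      exact Finset.sum_congr rfl fun u _ => by
        rw [← Finset.sum_neg_distrib]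
        exact Finset.sum_congr rfl fun w _ => (anti w u)
    linarith
  have outer : ∑ u ∈ S, ∑ w ∈ Sᶜ, f u w = x a - x b := by
    rw [Finset.sum_eq_single_of_mem a haS]
    · rw [Finset.sum_eq_single_of_mem b (Finset.mem_compl.mpr hbS)]
      · simp [hf, hab]
      · intro w hw hwb
        have hw' : w ∉ S := Finset.mem_compl.mp hw
        by_cases h : T.Adj a w
        · exact absurd (cross a w haS hw' h).2 hwb
        · simp [hf, h]
    · intro u hu hua
      apply Finset.sum_eq_zero
      intro w hw
      have hw' : w ∉ S := Finset.mem_compl.mp hw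
      by_cases h : T.Adj u w
      · exact absurd (cross u w hu hw' h).1 hua
      · simp [hf, h]
  refine ⟨∑ u ∈ S, x u, ?_⟩
  symm
  rw [total]
  calc ∑ u ∈ S, ∑ w, f u w = ∑ u ∈ S, ((∑ w ∈ S, f u w) + ∑ w ∈ Sᶜ, f u w) :=
        Finset.sum_congr rfl fun u _ => split u
    _ = (∑ u ∈ S, ∑ w ∈ S, f u w) + ∑ u ∈ S, ∑ w ∈ Sᶜ, f u w := Finset.sum_add_distrib
    _ = x a - x b := by rw [inner_zero, outer, zero_add]

/-- On a tree, for an integer Laplacian eigenvalue `μ` and an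
integer eigenvector `x`, the difference of any two entries of `x` is divisible
by `μ`. -/
theorem tree_int_eigenvector {V : Type*} [Fintype V] [DecidableEq V]
    (T : SimpleGraph V) (ht : T.IsTree)
    (μ : ℤ) (x : V → ℤ) (hx : x ≠ 0)
    (heig : lapR T *ᵥ (fun v => (x v : ℝ)) = (μ : ℝ) • (fun v => (x v : ℝ))) :
    ∀ u v : V, μ ∣ (x u - x v) := by
  letI := Classical.decRel T.Adj
  have key : ∀ u, (T.degree u : ℤ) * x u - ∑ w ∈ T.neighborFinset u, x w = μ * x u := by
    intro u
    have h := congrFun heig u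
    rw [show lapR T = T.lapMatrix ℝ from rfl, SimpleGraph.lapMatrix_mulVec_apply] at h
    have h' : (T.degree u : ℝ) * (x u : ℝ) - ∑ w ∈ T.neighborFinset u, (x w : ℝ)
        = (μ : ℝ) * (x u : ℝ) := h
    exact_mod_cast h'
  have edge := fun {a b} hab => edge_dvd_aux T ht μ x key (a := a) (b := b) hab
  have walkdvd : ∀ {u v : V} (_ : T.Walk u v), μ ∣ x u - x v := by
    intro u v p
    induction p with
    | nil => simp
    | @cons u' w' v' h q ih =>
        have h1 := edge h
        have : x u' - x v' = (x u' - x w') + (x w' - x v') := by ring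
        rw [this]
        exact dvd_add h1 ih
  intro u v
  exact walkdvd (ht.1.1 u v).some
end

section
/- Let Z = X + Y be the join of two nonempty finite simple graphs, and suppose Z has n ≥ 3 vertices. If Z admits Laplacian fractional revival at time τ, i.e., U(τ)e_a = α e_a + β e_b for some distinct vertices a, b of Z and some α, β ∈ ℂ, then τ is an integer multiple of 2π/n. -/
open Matrix

open scoped Nat

section Helpers
variable {V : Type*} [Fintype V] [DecidableEq V]

private lemma hasSum_exp_mulVec (A : Matrix V V ℂ) (x : V → ℂ) :
    HasSum (fun k : ℕ => ((k ! : ℂ)⁻¹ • (A ^ k *ᵥ x)))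
      (NormedSpace.exp A *ᵥ x) := by
  letI : SeminormedRing (Matrix V V ℂ) := Matrix.linftyOpSemiNormedRing
  letI : NormedRing (Matrix V V ℂ) := Matrix.linftyOpNormedRing
  letI : NormedAlgebra ℂ (Matrix V V ℂ) := Matrix.linftyOpNormedAlgebra
  have hsum : Summable fun k : ℕ => ((k ! : ℂ)⁻¹) • A ^ k :=
    NormedSpace.expSeries_summable' (𝕂 := ℂ) A
  let l : Matrix V V ℂ →ₗ[ℂ] (V → ℂ) :=
    { toFun := fun M => M *ᵥ x
      map_add' := fun M N => Matrix.add_mulVec M N x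
      map_smul' := fun c M => Matrix.smul_mulVec c M x }
  have hl : Continuous l := l.continuous_of_finiteDimensional
  have h2 : NormedSpace.exp A = ∑' k : ℕ, (k ! : ℂ)⁻¹ • A ^ k := by
    rw [NormedSpace.exp_eq_tsum ℂ]
  have h1 : HasSum (fun k : ℕ => l ((k ! : ℂ)⁻¹ • A ^ k)) (l (NormedSpace.exp A)) := by
    rw [h2]
    exact hsum.hasSum.map l.toAddMonoidHom hl
  have : ∀ k : ℕ, l ((k ! : ℂ)⁻¹ • A ^ k) = (k ! : ℂ)⁻¹ • (A ^ k *ᵥ x) := by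
    intro k
    simp [l, Matrix.smul_mulVec]
  simp only [this] at h1
  exact h1

private lemma pow_mulVec_eigen {A : Matrix V V ℂ} {x : V → ℂ} {μ : ℂ}
    (h : A *ᵥ x = μ • x) (k : ℕ) : A ^ k *ᵥ x = μ ^ k • x := by
  induction k with
  | zero => simp [Matrix.one_mulVec]
  | succ k ih =>
      rw [pow_succ, ← Matrix.mulVec_mulVec, h, Matrix.mulVec_smul, ih, smul_smul,
        pow_succ, mul_comm]

private lemma exp_mulVec_eigen {A : Matrix V V ℂ} {x : V → ℂ} {μ : ℂ}
    (h : A *ᵥ x = μ • x) :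
    NormedSpace.exp A *ᵥ x = NormedSpace.exp μ • x := by
  have h1 := hasSum_exp_mulVec A x
  have h2 : HasSum (fun k : ℕ => ((k ! : ℂ)⁻¹ * μ ^ k) • x) (NormedSpace.exp μ • x) := by
    have hs : HasSum (fun k : ℕ => (k ! : ℂ)⁻¹ • μ ^ k) (NormedSpace.exp μ) := by
      rw [NormedSpace.exp_eq_tsum ℂ]
      exact (NormedSpace.expSeries_summable' (𝕂 := ℂ) μ).hasSum
    simpa [smul_eq_mul] using hs.smul_const x
  have h3 : (fun k : ℕ => ((k ! : ℂ)⁻¹ • (A ^ k *ᵥ x))) =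
      fun k : ℕ => ((k ! : ℂ)⁻¹ * μ ^ k) • x := by
    funext k
    rw [pow_mulVec_eigen h k, smul_smul]
  rw [h3] at h1
  exact h1.unique h2

private lemma exp_mulVec_mem {A : Matrix V V ℂ} (W : Submodule ℂ (V → ℂ))
    (hA : ∀ u ∈ W, A *ᵥ u ∈ W) {x : V → ℂ} (hx : x ∈ W) :
    NormedSpace.exp A *ᵥ x ∈ W := by
  have h1 := hasSum_exp_mulVec A x
  have hmem : ∀ k : ℕ, (k ! : ℂ)⁻¹ • (A ^ k *ᵥ x) ∈ W := by
    intro k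
    refine W.smul_mem _ ?_
    induction k with
    | zero => simpa [Matrix.one_mulVec] using hx
    | succ k ih =>
        rw [pow_succ', ← Matrix.mulVec_mulVec]
        exact hA _ ih
  have hclosed : IsClosed (W : Set (V → ℂ)) := Submodule.closed_of_finiteDimensional W
  exact hclosed.mem_of_tendsto h1.tendsto_sum_nat
    (Filter.Eventually.of_forall fun s => W.sum_mem fun i _ => hmem i)

private lemma lapR_eq (Z : SimpleGraph V) [inst : DecidableRel Z.Adj] :
    lapR Z = Z.lapMatrix ℝ := by
  unfold lapR
  congr!

private lemma lapC_mulVec (Z : SimpleGraph V) [DecidableRel Z.Adj] (x : V → ℂ) (i : V) :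
    (lapC Z *ᵥ x) i = ∑ j, if Z.Adj i j then x i - x j else 0 := by
  have hl : lapC Z = (Z.degMatrix ℝ - Z.adjMatrix ℝ).map Complex.ofReal := by
    rw [lapC, lapR_eq]; rfl
  rw [hl]
  have : ((Z.degMatrix ℝ - Z.adjMatrix ℝ).map Complex.ofReal *ᵥ x) i
      = ∑ j, ((if i = j then (Z.degree i : ℂ) else 0) - if Z.Adj i j then 1 else 0) * x j := by
    simp [Matrix.mulVec, dotProduct, Matrix.map_apply, Matrix.sub_apply,
      SimpleGraph.degMatrix, Matrix.diagonal_apply, SimpleGraph.adjMatrix_apply,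
      apply_ite Complex.ofReal]
  rw [this]
  simp only [sub_mul, Finset.sum_sub_distrib, ite_mul, zero_mul, one_mul]
  rw [Finset.sum_ite_eq Finset.univ i (fun j => (Z.degree i : ℂ) * x j)]
  simp only [Finset.mem_univ, if_true]
  rw [Z.degree_eq_sum_if_adj (R := ℂ) i, Finset.sum_mul]
  simp only [ite_mul, zero_mul, one_mul]
  rw [← Finset.sum_sub_distrib]
  exact Finset.sum_congr rfl fun j _ => by by_cases h : Z.Adj i j <;> simp [h]

private lemma lapC_symm (Z : SimpleGraph V) : (lapC Z)ᴴ = lapC Z := by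
  letI := Classical.decRel Z.Adj
  ext i j
  simp only [Matrix.conjTranspose_apply, lapC, Matrix.map_apply, Complex.star_def,
    Complex.conj_ofReal, Complex.ofReal_inj]
  rw [lapR_eq, (Z.isSymm_lapMatrix (R := ℝ)).apply i j]

private lemma lapC_transpose (Z : SimpleGraph V) : (lapC Z)ᵀ = lapC Z := by
  letI := Classical.decRel Z.Adj
  ext i j
  simp only [Matrix.transpose_apply, lapC, Matrix.map_apply, Complex.ofReal_inj]
  rw [lapR_eq, (Z.isSymm_lapMatrix (R := ℝ)).apply i j]

end Helpers

set_option maxHeartbeats 1600000 in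
private lemma key {V : Type*} [Fintype V] [DecidableEq V]
    (Z : SimpleGraph V) (S : Set V) (hS : S.Nonempty) (hS' : Sᶜ.Nonempty)
    (hjoin : ∀ u ∈ S, ∀ v ∈ Sᶜ, Z.Adj u v)
    (hn : 3 ≤ Fintype.card V) (τ : ℝ) (a b : V) (α β : ℂ)
    (hab : a ≠ b) (ha : a ∈ S)
    (heq : transition Z τ *ᵥ Pi.single a 1 =
      α • (Pi.single a 1 : V → ℂ) + β • (Pi.single b 1 : V → ℂ)) :
    ∃ k : ℤ, τ = (k : ℝ) * (2 * Real.pi / (Fintype.card V : ℝ)) := by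
  letI := Classical.decRel Z.Adj
  letI : DecidablePred (· ∈ S) := Classical.decPred _
  set n := Fintype.card V with hn_def
  have hadj : ∀ u ∈ S, ∀ v, v ∉ S → Z.Adj u v := by
    intro u hu v hv
    exact hjoin u hu v (Set.mem_compl hv)
  set Sf : Finset V := Finset.univ.filter (· ∈ S) with hSf_def
  set Tf : Finset V := Finset.univ.filter (fun x => ¬ x ∈ S) with hTf_def
  set p := Sf.card with hp_def
  set q := Tf.card with hq_def
  have hpq : p + q = n := by
    rw [hp_def, hq_def, hSf_def, hTf_def,
      Finset.card_filter_add_card_filter_not, Finset.card_univ]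
  have hp1 : 1 ≤ p := by
    obtain ⟨s, hs⟩ := hS
    have : s ∈ Sf := by simp [hSf_def, hs]
    exact Finset.card_pos.mpr ⟨s, this⟩
  have hq1' : 1 ≤ q := by
    obtain ⟨t, ht⟩ := hS'
    have : t ∈ Tf := by simpa [hTf_def] using ht
    exact Finset.card_pos.mpr ⟨t, this⟩
  have hn0 : (n : ℂ) ≠ 0 := by
    simp only [Ne, Nat.cast_eq_zero]; omega
  have hp0 : (p : ℂ) ≠ 0 := by
    simp only [Ne, Nat.cast_eq_zero]; omega
  -- the eigenvector for eigenvalue n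
  set v : V → ℂ := fun i => if i ∈ S then (q : ℂ) else -(p : ℂ) with hv_def
  have h_ones : lapC Z *ᵥ (fun _ => (1:ℂ)) = (0 : ℂ) • (fun _ => (1:ℂ)) := by
    funext i
    rw [lapC_mulVec]
    simp
  have hcastn : (p : ℂ) + (q : ℂ) = (n : ℂ) := by
    have : ((p + q : ℕ) : ℂ) = ((n : ℕ) : ℂ) := by rw [hpq]
    push_cast at this
    exact this
  have h_v : lapC Z *ᵥ v = (n : ℂ) • v := by
    funext i
    rw [lapC_mulVec]
    by_cases hi : i ∈ S
    · have hterm : ∀ j, (if Z.Adj i j then v i - v j else 0)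
          = (if j ∈ S then 0 else (n:ℂ)) := by
        intro j
        by_cases hj : j ∈ S
        · simp [hv_def, hi, hj]
        · have hadj' : Z.Adj i j := hadj i hi j hj
          have hval : v i - v j = (n : ℂ) := by
            simp only [hv_def, if_pos hi, if_neg hj, sub_neg_eq_add]
            linear_combination hcastn
          simp [hadj', hval, hj]
      rw [Finset.sum_congr rfl fun j _ => hterm j]
      rw [Finset.sum_ite, Finset.sum_const, Finset.sum_const]
      have : (Finset.univ.filter (fun j => ¬ j ∈ S)).card = q := rfl
      simp [this, hv_def, hi, mul_comm]
    · have hterm : ∀ j, (if Z.Adj i j then v i - v j else 0)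
          = (if j ∈ S then -(n:ℂ) else 0) := by
        intro j
        by_cases hj : j ∈ S
        · have hadj' : Z.Adj i j := (hadj j hj i hi).symm
          have hval : v i - v j = -(n : ℂ) := by
            simp only [hv_def, if_neg hi, if_pos hj]
            linear_combination -hcastn
          simp [hadj', hval, hj]
        · simp [hv_def, hi, hj]
      rw [Finset.sum_congr rfl fun j _ => hterm j]
      rw [Finset.sum_ite, Finset.sum_const, Finset.sum_const]
      have : (Finset.univ.filter (fun j => j ∈ S)).card = p := rfl
      simp [this, hv_def, hi, mul_comm]
  -- the invariant subspace W
  set W : Submodule ℂ (V → ℂ) :=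
    { carrier := {u | (∀ j, j ∉ S → u j = 0) ∧ ∑ j, u j = 0}
      add_mem' := by
        rintro u w ⟨hu1, hu2⟩ ⟨hw1, hw2⟩
        refine ⟨fun j hj => by simp [hu1 j hj, hw1 j hj], ?_⟩
        simp only [Pi.add_apply, Finset.sum_add_distrib, hu2, hw2, add_zero]
      zero_mem' := by simp
      smul_mem' := by
        rintro c u ⟨hu1, hu2⟩
        refine ⟨fun j hj => by simp [hu1 j hj], ?_⟩
        simp only [Pi.smul_apply, smul_eq_mul, ← Finset.mul_sum, hu2, mul_zero] } with hW_def
  have hmemW : ∀ u : V → ℂ, ((∀ j, j ∉ S → u j = 0) ∧ ∑ j, u j = 0) ↔ u ∈ W := by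
    intro u; rfl
  have hWlap : ∀ u ∈ W, lapC Z *ᵥ u ∈ W := by
    intro u hu
    obtain ⟨hu1, hu2⟩ := (hmemW u).mpr hu
    rw [← hmemW]
    constructor
    · intro i hi
      rw [lapC_mulVec]
      have hterm : ∀ j, (if Z.Adj i j then u i - u j else 0)
          = -(if j ∈ S then u j else 0) := by
        intro j
        by_cases hj : j ∈ S
        · have hadj' : Z.Adj i j := (hadj j hj i hi).symm
          simp [hadj', hu1 i hi, hj]
        · simp [hu1 j hj, hu1 i hi, hj]
      rw [Finset.sum_congr rfl fun j _ => hterm j, Finset.sum_neg_distrib]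
      have : ∑ j, (if j ∈ S then u j else 0) = ∑ j, u j := by
        refine Finset.sum_congr rfl fun j _ => ?_
        by_cases hj : j ∈ S
        · simp [hj]
        · simp [hj, hu1 j hj]
      rw [this, hu2, neg_zero]
    · have hpt : ∀ i, (lapC Z *ᵥ u) i = ∑ j, ((if Z.Adj i j then u i else 0)
          - (if Z.Adj i j then u j else 0)) := by
        intro i
        rw [lapC_mulVec]
        refine Finset.sum_congr rfl fun j _ => ?_
        by_cases h : Z.Adj i j <;> simp [h]
      rw [Finset.sum_congr rfl fun i _ => hpt i]
      simp only [Finset.sum_sub_distrib]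
      rw [sub_eq_zero]
      rw [Finset.sum_comm]
      refine Finset.sum_congr rfl fun i _ => Finset.sum_congr rfl fun j _ => ?_
      exact if_congr (Z.adj_comm j i) rfl rfl
  -- the transition matrix
  set A : Matrix V V ℂ := (Complex.I * (τ:ℂ)) • lapC Z with hA_def
  have htrans : transition Z τ = NormedSpace.exp A := rfl
  have hWA : ∀ u ∈ W, A *ᵥ u ∈ W := by
    intro u hu
    rw [hA_def, Matrix.smul_mulVec]
    exact W.smul_mem _ (hWlap u hu)
  set E : ℂ := NormedSpace.exp (Complex.I * (τ:ℂ) * (n:ℂ)) with hE_def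
  have hU_ones : NormedSpace.exp A *ᵥ (fun _ => (1:ℂ)) = (fun _ => (1:ℂ)) := by
    have h0 : A *ᵥ (fun _ => (1:ℂ)) = (0:ℂ) • (fun _ => (1:ℂ)) := by
      rw [hA_def, Matrix.smul_mulVec, h_ones]
      simp
    rw [exp_mulVec_eigen h0, NormedSpace.exp_zero, one_smul]
  have hU_v : NormedSpace.exp A *ᵥ v = E • v := by
    have h0 : A *ᵥ v = (Complex.I * (τ:ℂ) * (n:ℂ)) • v := by
      rw [hA_def, Matrix.smul_mulVec, h_v, smul_smul]
    rw [exp_mulVec_eigen h0, hE_def]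
  -- decomposition of e_a
  set z : V → ℂ := fun j => if j ∈ S then (Pi.single a 1 : V → ℂ) j - (p:ℂ)⁻¹ else 0
    with hz_def
  have hz_mem : z ∈ W := by
    rw [← hmemW]
    constructor
    · intro j hj
      simp [hz_def, hj]
    · have h1 : ∑ j, z j = ∑ j ∈ Sf, ((Pi.single a 1 : V → ℂ) j - (p:ℂ)⁻¹) :=
        (Finset.sum_filter _ _).symm
      rw [h1, Finset.sum_sub_distrib, Finset.sum_const]
      have h2 : ∑ j ∈ Sf, (Pi.single a 1 : V → ℂ) j = 1 := by
        have haSf : a ∈ Sf := by simp [hSf_def, ha]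
        simp only [Pi.single_apply]
        rw [Finset.sum_ite_eq' Sf a (fun _ => (1:ℂ))]
        simp [haSf]
      rw [h2]
      rw [nsmul_eq_mul]
      rw [mul_inv_cancel₀ hp0]
      ring
  have hdecomp : (Pi.single a 1 : V → ℂ)
      = (n:ℂ)⁻¹ • (fun _ => (1:ℂ)) + ((p:ℂ)*(n:ℂ))⁻¹ • v + z := by
    funext j
    simp only [Pi.add_apply, Pi.smul_apply, smul_eq_mul, mul_one]
    by_cases hj : j ∈ S
    · simp only [hz_def, hv_def, if_pos hj]
      have hkey : (n:ℂ)⁻¹ + ((p:ℂ)*(n:ℂ))⁻¹ * (q:ℂ) = (p:ℂ)⁻¹ := by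
        field_simp
        linear_combination hcastn
      linear_combination -hkey
    · have hja : j ≠ a := fun h => hj (h ▸ ha)
      simp only [hz_def, hv_def, if_neg hj, Pi.single_eq_of_ne hja]
      field_simp
      ring
  set g : V → ℂ := NormedSpace.exp A *ᵥ z with hg_def
  have hgW : g ∈ W := exp_mulVec_mem W hWA hz_mem
  obtain ⟨hg1, hg2⟩ := (hmemW g).mpr hgW
  have hUea : NormedSpace.exp A *ᵥ (Pi.single a 1 : V → ℂ)
      = (n:ℂ)⁻¹ • (fun _ => (1:ℂ)) + (((p:ℂ)*(n:ℂ))⁻¹ * E) • v + g := by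
    conv_lhs => rw [hdecomp]
    rw [Matrix.mulVec_add, Matrix.mulVec_add, Matrix.mulVec_smul, Matrix.mulVec_smul,
      hU_ones, hU_v, smul_smul, hg_def]
  have hdia : (n:ℂ)⁻¹ • (fun _ => (1:ℂ)) + (((p:ℂ)*(n:ℂ))⁻¹ * E) • v + g
      = α • (Pi.single a 1 : V → ℂ) + β • (Pi.single b 1 : V → ℂ) := by
    rw [← hUea, ← htrans]
    exact heq
  have hpt : ∀ i, (n:ℂ)⁻¹ + ((p:ℂ)*(n:ℂ))⁻¹ * E * v i + g i
      = α * (Pi.single a 1 : V → ℂ) i + β * (Pi.single b 1 : V → ℂ) i := by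
    intro i
    have := congrFun hdia i
    simpa [mul_assoc] using this
  -- main claim : E = 1
  have hE1 : E = 1 := by
    by_cases hcase : ∃ y, y ∉ S ∧ y ≠ b
    · obtain ⟨y, hy, hyb⟩ := hcase
      have hya : y ≠ a := fun h => hy (h ▸ ha)
      have h0 := hpt y
      rw [Pi.single_eq_of_ne hya, Pi.single_eq_of_ne hyb, hg1 y hy] at h0
      simp only [hv_def, if_neg hy] at h0
      have hinv : ((p:ℂ)*(n:ℂ))⁻¹ * (p:ℂ) = (n:ℂ)⁻¹ := by
        rw [mul_inv]
        field_simp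
      have h0' : (n:ℂ)⁻¹ * E = (n:ℂ)⁻¹ * 1 := by
        linear_combination -h0 - E * hinv
      exact mul_left_cancel₀ (inv_ne_zero hn0) h0'
    · push_neg at hcase
      -- Sᶜ = {b}
      have hbS : b ∉ S := by
        obtain ⟨y0, hy0⟩ := hS'
        have hy0' : y0 ∉ S := Set.mem_compl_iff _ _ |>.mp hy0
        have := hcase y0 hy0'
        rwa [← this]
      have hTf_eq : Tf = {b} := by
        ext j
        simp only [hTf_def, Finset.mem_filter, Finset.mem_univ, true_and,
          Finset.mem_singleton]
        constructor
        · exact fun hj => hcase j hj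
        · rintro rfl; exact hbS
      have hq1 : q = 1 := by rw [hq_def, hTf_eq, Finset.card_singleton]
      have hp2 : 2 ≤ p := by omega
      have hpn : p + 1 = n := by omega
      -- pointwise equations
      have heqS : ∀ i, i ∈ S → i ≠ a → g i = -(n:ℂ)⁻¹ - ((p:ℂ)*(n:ℂ))⁻¹ * E := by
        intro i hi hia
        have hib : i ≠ b := fun h => hbS (h ▸ hi)
        have h0 := hpt i
        rw [Pi.single_eq_of_ne hia, Pi.single_eq_of_ne hib] at h0
        simp only [hv_def, if_pos hi, hq1, Nat.cast_one, mul_one] at h0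
        linear_combination h0
      have heqa : g a = α - (n:ℂ)⁻¹ - ((p:ℂ)*(n:ℂ))⁻¹ * E := by
        have h0 := hpt a
        rw [Pi.single_eq_same, Pi.single_eq_of_ne hab] at h0
        simp only [hv_def, if_pos ha, hq1, Nat.cast_one, mul_one] at h0
        linear_combination h0
      -- sum of g over S is zero
      have hsum_Sf : ∑ i ∈ Sf, g i = 0 := by
        have := Finset.sum_filter_add_sum_filter_not Finset.univ (· ∈ S) g
        rw [← hSf_def, ← hTf_def] at this  -- may not be needed
        rw [hTf_eq, Finset.sum_singleton, hg1 b hbS, add_zero] at this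
        rw [this, hg2]
      have haSf : a ∈ Sf := by simp [hSf_def, ha]
      have hsum_split : g a + ∑ i ∈ Sf.erase a, g i = 0 := by
        rw [Finset.add_sum_erase Sf g haSf]
        exact hsum_Sf
      have hsum_erase : ∑ i ∈ Sf.erase a, g i
          = ((p - 1 : ℕ) : ℂ) * (-(n:ℂ)⁻¹ - ((p:ℂ)*(n:ℂ))⁻¹ * E) := by
        have hconst : ∀ i ∈ Sf.erase a, g i = -(n:ℂ)⁻¹ - ((p:ℂ)*(n:ℂ))⁻¹ * E := by
          intro i hi
          have hia := Finset.ne_of_mem_erase hi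
          have hiS : i ∈ S := by
            have := Finset.mem_of_mem_erase hi
            simpa [hSf_def] using this
          exact heqS i hiS hia
        rw [Finset.sum_congr rfl hconst, Finset.sum_const, nsmul_eq_mul,
          Finset.card_erase_of_mem haSf]
      have hcastp1 : ((p - 1 : ℕ) : ℂ) = (p:ℂ) - 1 := by
        have : (1:ℕ) ≤ p := hp1
        push_cast [this]
        ring
      -- E = n α - p
      have hE : E = (n:ℂ) * α - (p:ℂ) := by
        rw [hsum_erase, heqa, hcastp1] at hsum_split
        field_simp at hsum_split
        have h2 : ((p:ℂ) * (n:ℂ)) * (E - ((n:ℂ) * α - (p:ℂ))) = 0 := by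
          linear_combination -(n:ℂ) * hsum_split
        rcases mul_eq_zero.mp h2 with h3 | h3
        · exact absurd h3 (mul_ne_zero hp0 hn0)
        · exact sub_eq_zero.mp h3
      -- g = α • z
      have hgz : NormedSpace.exp A *ᵥ z = α • z := by
        rw [← hg_def]
        funext i
        simp only [Pi.smul_apply, smul_eq_mul]
        by_cases hi : i ∈ S
        · by_cases hia : i = a
          · subst hia
            rw [heqa, hE]
            simp only [hz_def, if_pos hi, Pi.single_eq_same]
            field_simp
            ring
          · rw [heqS i hi hia, hE]
            simp only [hz_def, if_pos hi, Pi.single_eq_of_ne hia]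
            field_simp
            ring
        · rw [hg1 i hi]
          simp [hz_def, hi]
      -- conjugation trick: |α| = 1
      have hza : z a = 1 - (p:ℂ)⁻¹ := by
        simp [hz_def, ha, Pi.single_eq_same]
      have hza0 : z a ≠ 0 := by
        rw [hza]
        intro h
        have h1 : (p:ℂ)⁻¹ = 1 := (sub_eq_zero.mp h).symm
        have h2 : (p:ℂ) = 1 := inv_eq_one.mp h1
        have : p = 1 := by exact_mod_cast h2
        omega
      have hstarz : star z = z := by
        funext i
        simp only [Pi.star_apply, hz_def, Pi.single_apply]
        split_ifs <;> simp
      have hAH : Aᴴ = -A := by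
        rw [hA_def, Matrix.conjTranspose_smul, lapC_symm]
        rw [← neg_smul]
        congr 1
        simp [Complex.star_def, Complex.conj_ofReal]
      have hAT : Aᵀ = A := by
        rw [hA_def, Matrix.transpose_smul, lapC_transpose]
      have hBsymm : (NormedSpace.exp (-A))ᵀ = NormedSpace.exp (-A) := by
        rw [← Matrix.exp_transpose, Matrix.transpose_neg, hAT]
      have hUH : (NormedSpace.exp A)ᴴ = NormedSpace.exp (-A) := by
        rw [← Matrix.exp_conjTranspose, hAH]
      have hBz : NormedSpace.exp (-A) *ᵥ z = (star α) • z := by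
        have h1 := congrArg star hgz
        rw [Matrix.star_mulVec, hUH, star_smul, hstarz] at h1
        rw [← hBsymm, Matrix.vecMul_transpose] at h1
        exact h1
      have hid : NormedSpace.exp (-A) * NormedSpace.exp A = 1 := by
        rw [← Matrix.exp_add_of_commute (-A) A (Commute.neg_left (Commute.refl A)),
          neg_add_cancel, NormedSpace.exp_zero]
      have hz_eq : ((α * star α) : ℂ) • z = z := by
        calc (α * star α) • z = α • ((star α) • z) := mul_smul α (star α) z
        _ = α • (NormedSpace.exp (-A) *ᵥ z) := by rw [hBz]
        _ = NormedSpace.exp (-A) *ᵥ (α • z) := by rw [Matrix.mulVec_smul]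
        _ = NormedSpace.exp (-A) *ᵥ (NormedSpace.exp A *ᵥ z) := by rw [hgz]
        _ = (NormedSpace.exp (-A) * NormedSpace.exp A) *ᵥ z := by
            rw [Matrix.mulVec_mulVec]
        _ = z := by rw [hid, Matrix.one_mulVec]
      have hαnorm : α * star α = 1 := by
        have hpt_a := congrFun hz_eq a
        simp only [Pi.smul_apply, smul_eq_mul] at hpt_a
        have h1 : (α * star α) * z a = 1 * z a := by rw [one_mul]; exact hpt_a
        exact mul_right_cancel₀ hza0 h1
      have hnormsq : Complex.normSq α = 1 := by
        have h1 : (Complex.normSq α : ℂ) = 1 := by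
          rw [← Complex.mul_conj]
          exact hαnorm
        exact_mod_cast h1
      -- |E| = 1
      have hEnormsq : Complex.normSq E = 1 := by
        have hEexp : E = Complex.exp (Complex.I * (τ:ℂ) * (n:ℂ)) := by
          rw [hE_def, Complex.exp_eq_exp_ℂ]
        have hre : (Complex.I * (τ:ℂ) * (n:ℂ)).re = 0 := by
          simp [Complex.mul_re, Complex.mul_im]
        have habs : ‖E‖ = 1 := by
          rw [hEexp, Complex.norm_exp, hre, Real.exp_zero]
        rw [← Complex.sq_norm, habs, one_pow]
      -- conclude α = 1 and E = 1
      have hnR : (p:ℝ) + 1 = (n:ℝ) := by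
        have : ((p + 1 : ℕ) : ℝ) = ((n:ℕ) : ℝ) := by rw [hpn]
        push_cast at this
        exact this
      have hpR : (2:ℝ) ≤ (p:ℝ) := by exact_mod_cast hp2
      have hEre : Complex.normSq ((n:ℂ) * α - (p:ℂ)) = 1 := by rw [← hE]; exact hEnormsq
      have hexpand : ((n:ℝ) * α.re - (p:ℝ))^2 + ((n:ℝ) * α.im)^2 = 1 := by
        have : ((n:ℂ) * α - (p:ℂ)).re = (n:ℝ) * α.re - (p:ℝ) := by
          simp [Complex.sub_re, Complex.mul_re]
        have him : ((n:ℂ) * α - (p:ℂ)).im = (n:ℝ) * α.im := by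
          simp [Complex.sub_im, Complex.mul_im]
        rw [Complex.normSq_apply, this, him] at hEre
        nlinarith [hEre]
      have hα1 : α.re * α.re + α.im * α.im = 1 := by
        rw [Complex.normSq_apply] at hnormsq
        exact hnormsq
      have hnx : (n:ℝ)^2 - 2*(p:ℝ)*(n:ℝ)*α.re + (p:ℝ)^2 = 1 := by
        linear_combination hexpand - (n:ℝ)^2 * hα1
      have hppos : (0:ℝ) < (p:ℝ) := by linarith
      have hnpos : (0:ℝ) < (n:ℝ) := by linarith
      have h2 : 2*(p:ℝ)*(n:ℝ)*(1 - α.re) = 0 := by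
        linear_combination hnx + (1 + (n:ℝ) - (p:ℝ)) * hnR
      have hxre : α.re = 1 := by
        rcases mul_eq_zero.mp h2 with h3 | h3
        · nlinarith
        · linarith
      have hxim : α.im = 0 := by
        have h4 : α.im * α.im = 0 := by nlinarith [hα1, hxre]
        exact mul_self_eq_zero.mp h4
      have hαval : α = 1 := Complex.ext (by simpa using hxre) (by simpa using hxim)
      rw [hE, hαval, mul_one]
      have hpn' : (p:ℂ) + 1 = (n:ℂ) := by
        have : ((p + 1 : ℕ) : ℂ) = ((n:ℕ) : ℂ) := by rw [hpn]
        push_cast at this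
        exact this
      linear_combination -hpn'
  -- from E = 1 to the conclusion
  have hxp : Complex.exp (Complex.I * (τ:ℂ) * (n:ℂ)) = 1 := by
    rw [Complex.exp_eq_exp_ℂ]
    exact hE1
  rw [Complex.exp_eq_one_iff] at hxp
  obtain ⟨k, hk⟩ := hxp
  refine ⟨k, ?_⟩
  have him := congrArg Complex.im hk
  simp only [Complex.mul_im, Complex.mul_re, Complex.I_re, Complex.I_im,
    Complex.ofReal_re, Complex.ofReal_im, Complex.natCast_re, Complex.natCast_im,
    Complex.intCast_re, Complex.intCast_im, Complex.re_ofNat, Complex.im_ofNat] at him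
  -- him should be : τ * n = k * (2 * π)  (up to arrangement)
  have hn0R : (n:ℝ) ≠ 0 := by
    simp only [Ne, Nat.cast_eq_zero]; omega
  field_simp
  nlinarith [him, Real.pi_pos]

/-- On a join graph (all edges present between a nonempty set
`S` and its nonempty complement) on `n ≥ 3` vertices, Laplacian fractional
revival can only occur at integer multiples of `2π/n`. -/
theorem join_LaFR_time {V : Type*} [Fintype V] [DecidableEq V]
    (Z : SimpleGraph V) (S : Set V) (hS : S.Nonempty) (hS' : Sᶜ.Nonempty)
    (hjoin : ∀ u ∈ S, ∀ v ∈ Sᶜ, Z.Adj u v)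
    (hn : 3 ≤ Fintype.card V) (τ : ℝ)
    (h : ∃ (a b : V) (α β : ℂ), a ≠ b ∧
      transition Z τ *ᵥ Pi.single a 1 =
        α • (Pi.single a 1 : V → ℂ) + β • (Pi.single b 1 : V → ℂ)) :
    ∃ k : ℤ, τ = (k : ℝ) * (2 * Real.pi / (Fintype.card V : ℝ)) := by
  obtain ⟨a, b, α, β, hab, heq⟩ := h
  by_cases ha : a ∈ S
  · exact key Z S hS hS' hjoin hn τ a b α β hab ha heq
  · have ha' : a ∈ Sᶜ := ha
    have hjoin' : ∀ u ∈ Sᶜ, ∀ v ∈ Sᶜᶜ, Z.Adj u v := by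
      intro u hu v hv
      have hvS : v ∈ S := by simpa using hv
      exact (hjoin v hvS u hu).symm
    have hS'' : Sᶜᶜ.Nonempty := by simpa using hS
    exact key Z Sᶜ hS' hS'' hjoin' hn τ a b α β hab ha' heq
end
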